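/- arXiv:2405.01357 — 3 statements merged into one kernel-verified Lean document; each statement's English description precedes it below -/
import Mathlib

section
/- (Second-order Schwarz–Pick inequality on a distinguished variety.) Let ω = (ω₁,ω₂) ∈ 𝔻². Then there exists a distinguished variety V ∩ 𝔻² (with V = Z(q) the zero set of a polynomial q ∈ ℂ[z,w]) such that for every function f : ℂ² → ℂ that is continuous on the closed bidisk, holomorphic on 𝔻², and satisfies |f(z)| ≤ 1 for all z ∈ V ∩ 𝔻², the following holds: setting αⱼ = 1 − |ωⱼ|² and βⱼ = −conj(ωⱼ)·(1 − |ωⱼ|²) for j = 1,2, γ₁ = α₁·∂f/∂z₁(ω) + α₂·∂f/∂z₂(ω), and γ₂ = (1/2)·Σ_{j,k ∈ {1,2}} αⱼ·αₖ·∂²f/∂zⱼ∂zₖ(ω) + β₁·∂f/∂z₁(ω) + β₂·∂f/∂z₂(ω), one has |γ₂·(1 − |f(ω)|²) + γ₁²·conj(f(ω))| ≤ (1 − |f(ω)|²)² − |γ₁|². -/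
/-- The open bidisk `𝔻² ⊆ ℂ²`. -/
def openBidisk : Set (ℂ × ℂ) := {z | ‖z.1‖ < 1 ∧ ‖z.2‖ < 1}

/-- The closed bidisk. -/
def closedBidisk : Set (ℂ × ℂ) := {z | ‖z.1‖ ≤ 1 ∧ ‖z.2‖ ≤ 1}

/-- The torus `𝕋²`, the distinguished boundary of the bidisk. -/
def torus : Set (ℂ × ℂ) := {z | ‖z.1‖ = 1 ∧ ‖z.2‖ = 1}

/-- The zero set in `ℂ²` of a polynomial in two variables. -/
def zeroSet (q : MvPolynomial (Fin 2) ℂ) : Set (ℂ × ℂ) :=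
  {z | MvPolynomial.eval ![z.1, z.2] q = 0}

/-- The standard basis vectors of `ℂ × ℂ`. -/
def e : Fin 2 → ℂ × ℂ := ![(1, 0), (0, 1)]



open Complex Metric Set MeasureTheory intervalIntegral
open scoped Real Topology

noncomputable section

/-- The complex absolute value, as an absolute value given by the norm. -/
def Complex.abs : AbsoluteValue ℂ ℝ where
  toFun z := ‖z‖
  map_mul' := norm_mul
  nonneg' := norm_nonneg
  eq_zero' _ := norm_eq_zero
  add_le' := norm_add_le

lemma Complex.norm_eq_abs (z : ℂ) : ‖z‖ = Complex.abs z := rfl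

lemma Complex.abs_ofReal (r : ℝ) : Complex.abs (r : ℂ) = |r| := by
  show ‖(r : ℂ)‖ = |r|
  simp

lemma Complex.abs_conj (z : ℂ) : Complex.abs ((starRingEnd ℂ) z) = Complex.abs z := by
  show ‖(starRingEnd ℂ) z‖ = ‖z‖
  simp

lemma Complex.abs_I : Complex.abs Complex.I = 1 := by
  show ‖Complex.I‖ = 1
  simp

lemma abs_circleMap_zero (R θ : ℝ) : Complex.abs (circleMap 0 R θ) = |R| :=
  norm_circleMap_zero R θ

lemma Complex.continuous_abs : Continuous Complex.abs := continuous_norm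

lemma absc_sq (w : ℂ) : ((Complex.abs w : ℂ))^2 = w * (starRingEnd ℂ) w := by
  rw [Complex.mul_conj]
  norm_cast
  exact Complex.sq_norm w

lemma mobius_sq_diff (a z : ℂ) :
    (Complex.abs (1 + (starRingEnd ℂ) a * z)) ^ 2 - Complex.abs (z + a) ^ 2
      = (1 - Complex.abs a ^ 2) * (1 - Complex.abs z ^ 2) := by
  have h := absc_sq
  apply Complex.ofReal_injective
  push_cast
  rw [h, h, h, h]
  simp only [map_add, map_mul, map_one, Complex.conj_conj]
  ring

lemma mobius_sq_diff' (a w : ℂ) :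
    (Complex.abs (1 - (starRingEnd ℂ) a * w)) ^ 2 - Complex.abs (a - w) ^ 2
      = (1 - Complex.abs a ^ 2) * (1 - Complex.abs w ^ 2) := by
  have h := mobius_sq_diff (-a) w
  simp only [map_neg, neg_mul, Complex.abs.map_neg] at h
  rw [show (1 : ℂ) + -((starRingEnd ℂ) a * w) = 1 - (starRingEnd ℂ) a * w by ring,
    show w + -a = -(a - w) by ring, Complex.abs.map_neg] at h
  rw [h]

lemma mobius_den_ne (a w : ℂ) (ha : Complex.abs a < 1) (hw : Complex.abs w < 1) :
    (1 : ℂ) - (starRingEnd ℂ) a * w ≠ 0 := by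
  intro h0
  have h := mobius_sq_diff' a w
  rw [h0] at h
  simp only [map_zero] at h
  have h1 : (0:ℝ) < 1 - Complex.abs a ^ 2 := by nlinarith [Complex.abs.nonneg a]
  have h2 : (0:ℝ) < 1 - Complex.abs w ^ 2 := by nlinarith [Complex.abs.nonneg w]
  nlinarith [mul_pos h1 h2, sq_nonneg (Complex.abs (a - w))]

lemma mobius_lt_one (a w : ℂ) (ha : Complex.abs a < 1) (hw : Complex.abs w < 1) :
    Complex.abs (a - w) < Complex.abs (1 - (starRingEnd ℂ) a * w) := by
  have h := mobius_sq_diff' a w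
  have h1 : (0:ℝ) < 1 - Complex.abs a ^ 2 := by nlinarith [Complex.abs.nonneg a]
  have h2 : (0:ℝ) < 1 - Complex.abs w ^ 2 := by nlinarith [Complex.abs.nonneg w]
  by_contra hc
  push_neg at hc
  have := pow_le_pow_left₀ (Complex.abs.nonneg _) hc 2
  nlinarith [mul_pos h1 h2]


lemma small_or_const {u : ℂ → ℂ} (hd : DifferentiableOn ℂ u (ball (0:ℂ) 1))
    (hb : ∀ z ∈ ball (0:ℂ) 1, Complex.abs (u z) ≤ 1) :
    (∀ z ∈ ball (0:ℂ) 1, Complex.abs (u z) < 1) ∨ (∀ z ∈ ball (0:ℂ) 1, u z = u 0) := by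
  by_cases h : ∃ z₀ ∈ ball (0:ℂ) 1, Complex.abs (u z₀) = 1
  · right
    obtain ⟨z₀, hz₀, habs⟩ := h
    have hmax : IsMaxOn (norm ∘ u) (ball (0:ℂ) 1) z₀ := by
      intro z hz
      simp only [Function.comp_apply, Complex.norm_eq_abs, habs]
      exact hb z hz
    have heq := Complex.eqOn_of_isPreconnected_of_isMaxOn_norm
      ((convex_ball (0:ℂ) 1).isPreconnected) isOpen_ball hd hz₀ hmax
    intro z hz
    have h1 := heq hz
    have h2 := heq (mem_ball_self one_pos)
    simp only [Function.const] at h1 h2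
    rw [h1, h2]

  · left
    intro z hz
    rcases lt_or_eq_of_le (hb z hz) with h1 | h1
    · exact h1
    · exact absurd ⟨z, hz, h1⟩ h

/-- Schwarz–Pick inequality at the origin, with closed bound. -/
lemma schwarz_pick_zero {u : ℂ → ℂ} (hd : DifferentiableOn ℂ u (ball (0:ℂ) 1))
    (hb : ∀ z ∈ ball (0:ℂ) 1, Complex.abs (u z) ≤ 1) :
    Complex.abs (deriv u 0) ≤ 1 - Complex.abs (u 0) ^ 2 := by
  have h0 : (0:ℂ) ∈ ball (0:ℂ) 1 := mem_ball_self one_pos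
  rcases small_or_const hd hb with hlt | hconst
  · -- u maps into the open disk
    set a := u 0 with ha_def
    have ha : Complex.abs a < 1 := hlt 0 h0
    have hu0 : DifferentiableAt ℂ u 0 := hd.differentiableAt (isOpen_ball.mem_nhds h0)
    set u' := deriv u 0 with hu'_def
    -- the Möbius transform m
    set m : ℂ → ℂ := fun z => (a - u z) / (1 - (starRingEnd ℂ) a * u z) with hm_def
    have hden : ∀ z ∈ ball (0:ℂ) 1, (1:ℂ) - (starRingEnd ℂ) a * u z ≠ 0 := fun z hz =>
      mobius_den_ne a (u z) ha (hlt z hz)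
    have hmd : DifferentiableOn ℂ m (ball (0:ℂ) 1) :=
      DifferentiableOn.div ((differentiableOn_const a).sub hd)
        ((differentiableOn_const 1).sub ((differentiableOn_const _).mul hd)) hden
    have hm0 : m 0 = 0 := by simp [hm_def, ← ha_def]
    have hmaps : MapsTo m (ball (0:ℂ) 1) (ball (m 0) 1) := by
      intro z hz
      rw [hm0, mem_ball, dist_zero_right, Complex.norm_eq_abs, hm_def]
      simp only
      rw [map_div₀, div_lt_one (by
        have := mobius_lt_one a (u z) ha (hlt z hz)
        exact lt_of_le_of_lt (Complex.abs.nonneg _) this)]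
      exact mobius_lt_one a (u z) ha (hlt z hz)
    have hderivm := Complex.norm_deriv_le_div_of_mapsTo_ball hmd (hmaps.mono_right ball_subset_closedBall) one_pos
    -- compute deriv m 0
    have hder : HasDerivAt m (-u' / (1 - (starRingEnd ℂ) a * a)) 0 := by
      have h1 : HasDerivAt (fun z => a - u z) (-u') 0 := (hu0.hasDerivAt.const_sub a)
      have h2 : HasDerivAt (fun z => (1:ℂ) - (starRingEnd ℂ) a * u z)
          (-((starRingEnd ℂ) a * u')) 0 := by
        have := (hu0.hasDerivAt.const_mul ((starRingEnd ℂ) a)).const_sub (1:ℂ)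
        simpa using this
      have hden0 : (1:ℂ) - (starRingEnd ℂ) a * u 0 ≠ 0 := hden 0 h0
      have := h1.div h2 hden0
      refine this.congr_deriv (Eq.symm ?_)
      rw [← ha_def]
      rw [div_eq_div_iff (show (1:ℂ) - (starRingEnd ℂ) a * a ≠ 0 from hden0) (pow_ne_zero 2 hden0)]
      ring
    have habs1 : Complex.abs ((1:ℂ) - (starRingEnd ℂ) a * a) = 1 - Complex.abs a ^ 2 := by
      have : (1:ℂ) - (starRingEnd ℂ) a * a = ((1 - Complex.abs a ^ 2 : ℝ) : ℂ) := by
        push_cast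
        rw [absc_sq]
        ring
      rw [this, Complex.abs_ofReal, abs_of_pos (by nlinarith [Complex.abs.nonneg a])]
    have hda : (0:ℝ) < 1 - Complex.abs a ^ 2 := by nlinarith [Complex.abs.nonneg a]
    rw [hder.deriv] at hderivm
    rw [Complex.norm_eq_abs, map_div₀, habs1, AbsoluteValue.map_neg] at hderivm
    rw [show (1:ℝ)/1 = 1 by norm_num] at hderivm
    exact (div_le_one hda).mp hderivm
  · -- u constant
    have : deriv u 0 = 0 := by
      have hev : u =ᶠ[nhds (0:ℂ)] (fun _ => u 0) := by
        filter_upwards [isOpen_ball.mem_nhds h0] with z hz using hconst z hz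
      rw [hev.deriv_eq, deriv_const]
    rw [this, map_zero]
    nlinarith [hb 0 h0, Complex.abs.nonneg (u 0)]


lemma abs_one_sub_conj_mul_self (a : ℂ) (ha : Complex.abs a < 1) :
    Complex.abs ((1:ℂ) - (starRingEnd ℂ) a * a) = 1 - Complex.abs a ^ 2 := by
  have h : (1:ℂ) - (starRingEnd ℂ) a * a = ((1 - Complex.abs a ^ 2 : ℝ) : ℂ) := by
    push_cast
    rw [absc_sq]
    ring
  rw [h, Complex.abs_ofReal, abs_of_pos (by nlinarith [Complex.abs.nonneg a])]

/-- Second-order Schur / Schwarz–Pick inequality at the origin of the unit disk. -/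
lemma schur_second_order {g : ℂ → ℂ} (hd : DifferentiableOn ℂ g (ball (0:ℂ) 1))
    (hb : ∀ z ∈ ball (0:ℂ) 1, Complex.abs (g z) ≤ 1) :
    Complex.abs ((deriv (deriv g) 0 / 2) * (1 - (Complex.abs (g 0):ℂ)^2)
        + (deriv g 0)^2 * (starRingEnd ℂ) (g 0))
      ≤ (1 - Complex.abs (g 0) ^ 2)^2 - Complex.abs (deriv g 0) ^ 2 := by
  have h0 : (0:ℂ) ∈ ball (0:ℂ) 1 := mem_ball_self one_pos
  rcases small_or_const hd hb with hlt | hconst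
  swap
  · -- constant case
    have hder0 : ∀ z ∈ ball (0:ℂ) 1, deriv g z = 0 := by
      intro z hz
      have hev : g =ᶠ[nhds z] (fun _ => g 0) := by
        filter_upwards [isOpen_ball.mem_nhds hz] with w hw using hconst w hw
      rw [hev.deriv_eq, deriv_const]
    have h1 : deriv g 0 = 0 := hder0 0 h0
    have h2 : deriv (deriv g) 0 = 0 := by
      have hev : deriv g =ᶠ[nhds (0:ℂ)] (fun _ => (0:ℂ)) := by
        filter_upwards [isOpen_ball.mem_nhds h0] with w hw using hder0 w hw
      rw [hev.deriv_eq, deriv_const]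
    rw [h1, h2]
    simp only [zero_div, zero_mul, ne_eq, OfNat.ofNat_ne_zero, not_false_eq_true, zero_pow,
      add_zero, map_zero]
    nlinarith [hb 0 h0, Complex.abs.nonneg (g 0)]
  -- nonconstant case : g maps into the open disk
  set a := g 0 with ha_def
  have ha : Complex.abs a < 1 := hlt 0 h0
  set Dc : ℂ := 1 - (starRingEnd ℂ) a * a with hDc_def
  have hDc_abs : Complex.abs Dc = 1 - Complex.abs a ^ 2 := abs_one_sub_conj_mul_self a ha
  have hDpos : (0:ℝ) < 1 - Complex.abs a ^ 2 := by nlinarith [Complex.abs.nonneg a]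
  have hDc_ne : Dc ≠ 0 := by
    intro h
    rw [h, map_zero] at hDc_abs
    exact absurd hDc_abs.symm (ne_of_gt hDpos)
  have hden : ∀ z ∈ ball (0:ℂ) 1, (1:ℂ) - (starRingEnd ℂ) a * g z ≠ 0 := fun z hz =>
    mobius_den_ne a (g z) ha (hlt z hz)
  set h : ℂ → ℂ := fun z => (a - g z) / (1 - (starRingEnd ℂ) a * g z) with hh_def
  have hdh : DifferentiableOn ℂ h (ball (0:ℂ) 1) :=
    DifferentiableOn.div ((differentiableOn_const a).sub hd)
      ((differentiableOn_const 1).sub ((differentiableOn_const _).mul hd)) hden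
  have hh0 : h 0 = 0 := by simp [hh_def, ← ha_def]
  have hmaps : MapsTo h (ball (0:ℂ) 1) (ball (h 0) 1) := by
    intro z hz
    rw [hh0, mem_ball, dist_zero_right, Complex.norm_eq_abs, hh_def]
    simp only
    rw [map_div₀, div_lt_one (lt_of_le_of_lt (Complex.abs.nonneg _)
      (mobius_lt_one a (g z) ha (hlt z hz)))]
    exact mobius_lt_one a (g z) ha (hlt z hz)
  set k : ℂ → ℂ := dslope h 0 with hk_def
  have hdk : DifferentiableOn ℂ k (ball (0:ℂ) 1) :=
    (Complex.differentiableOn_dslope (isOpen_ball.mem_nhds h0)).mpr hdh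
  have hk_bound : ∀ z ∈ ball (0:ℂ) 1, Complex.abs (k z) ≤ 1 := by
    intro z hz
    have := Complex.norm_dslope_le_div_of_mapsTo_ball hdh (hmaps.mono_right ball_subset_closedBall) hz
    exact (by simpa using this : ‖dslope h 0 z‖ ≤ 1)
  -- h z = z * k z
  have hzk : ∀ z : ℂ, h z = z * k z := by
    intro z
    have := sub_smul_dslope h 0 z
    rw [sub_zero, hh0, sub_zero, smul_eq_mul] at this
    rw [← this, hk_def]
  -- the key pointwise identity : g z = (a - z * k z) / (1 - conj a * (z * k z))
  have hden2 : ∀ z ∈ ball (0:ℂ) 1, (1:ℂ) - (starRingEnd ℂ) a * (z * k z) ≠ 0 := by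
    intro z hz
    rw [← hzk z]
    have hkey : ((1:ℂ) - (starRingEnd ℂ) a * h z) * (1 - (starRingEnd ℂ) a * g z) = Dc := by
      have hne := hden z hz
      rw [hh_def]
      simp only
      field_simp [hne]
      ring
    intro hzero
    rw [hzero, zero_mul] at hkey
    exact hDc_ne hkey.symm
  set G : ℂ → ℂ := fun z => (a - z * k z) / (1 - (starRingEnd ℂ) a * (z * k z)) with hG_def
  have hgG : EqOn g G (ball (0:ℂ) 1) := by
    intro z hz
    rw [hG_def]
    simp only
    rw [← hzk z, eq_div_iff (by rw [hzk z]; exact hden2 z hz)]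
    have hne := hden z hz
    rw [hh_def]
    simp only
    linear_combination (div_mul_cancel₀ (a - g z) hne)
  -- analyticity of k and its derivatives
  have hk_an : AnalyticOnNhd ℂ k (ball (0:ℂ) 1) := hdk.analyticOnNhd isOpen_ball
  have hk'_diff : DifferentiableAt ℂ (deriv k) 0 := (hk_an.deriv 0 h0).differentiableAt
  -- derivative of G on the ball
  set VG : ℂ → ℂ := fun z =>
    -Dc * (k z + z * deriv k z) / (1 - (starRingEnd ℂ) a * (z * k z))^2 with hVG_def
  have hGder : ∀ z ∈ ball (0:ℂ) 1, HasDerivAt G (VG z) z := by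
    intro z hz
    have hkz : HasDerivAt k (deriv k z) z :=
      (hdk.differentiableAt (isOpen_ball.mem_nhds hz)).hasDerivAt
    have hzkd : HasDerivAt (fun w => w * k w) (k z + z * deriv k z) z := by
      exact ((hasDerivAt_id' z).mul hkz).congr_deriv (by ring)
    have hnum : HasDerivAt (fun w => a - w * k w) (-(k z + z * deriv k z)) z :=
      hzkd.const_sub a
    have hdend : HasDerivAt (fun w => (1:ℂ) - (starRingEnd ℂ) a * (w * k w))
        (-((starRingEnd ℂ) a * (k z + z * deriv k z))) z := by
      simpa using (hzkd.const_mul ((starRingEnd ℂ) a)).const_sub (1:ℂ)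
    have hdiv := hnum.div hdend (hden2 z hz)
    refine hdiv.congr_deriv (Eq.symm ?_)
    rw [hVG_def]
    simp only
    rw [div_eq_div_iff (pow_ne_zero 2 (hden2 z hz)) (pow_ne_zero 2 (hden2 z hz)), hDc_def]
    ring
  have hgder : ∀ z ∈ ball (0:ℂ) 1, HasDerivAt g (VG z) z := by
    intro z hz
    refine (hGder z hz).congr_of_eventuallyEq ?_
    filter_upwards [isOpen_ball.mem_nhds hz] with w hw using hgG hw
  have hc1 : deriv g 0 = -Dc * k 0 := by
    rw [(hgder 0 h0).deriv, hVG_def]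
    simp
  have hden20 : ((1:ℂ) - (starRingEnd ℂ) a * ((0:ℂ) * k 0)) ≠ 0 := hden2 0 h0
  have hVGder : HasDerivAt VG
      (-2*Dc*(deriv k 0 + (starRingEnd ℂ) a * (k 0)^2)) 0 := by
    have hk0 : HasDerivAt k (deriv k 0) 0 :=
      (hdk.differentiableAt (isOpen_ball.mem_nhds h0)).hasDerivAt
    have hk'0 : HasDerivAt (deriv k) (deriv (deriv k) 0) 0 := hk'_diff.hasDerivAt
    have hzk' : HasDerivAt (fun w => w * deriv k w)
        (deriv k 0 + 0 * deriv (deriv k) 0) 0 := by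
      exact ((hasDerivAt_id' (0:ℂ)).mul hk'0).congr_deriv (by ring)
    have hnum : HasDerivAt (fun w => -Dc * (k w + w * deriv k w))
        (-Dc * (deriv k 0 + (deriv k 0 + 0 * deriv (deriv k) 0))) 0 :=
      (hk0.add hzk').const_mul (-Dc)
    have hzkd0 : HasDerivAt (fun w => w * k w) (k 0 + 0 * deriv k 0) 0 := by
      exact ((hasDerivAt_id' (0:ℂ)).mul hk0).congr_deriv (by ring)
    have hin : HasDerivAt (fun w => (1:ℂ) - (starRingEnd ℂ) a * (w * k w))
        (-((starRingEnd ℂ) a * (k 0 + 0 * deriv k 0))) 0 := by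
      simpa using (hzkd0.const_mul ((starRingEnd ℂ) a)).const_sub (1:ℂ)
    have hdend : HasDerivAt (fun w => ((1:ℂ) - (starRingEnd ℂ) a * (w * k w))^2)
        (↑2 * ((1:ℂ) - (starRingEnd ℂ) a * ((0:ℂ) * k 0))^(2-1)
          * (-((starRingEnd ℂ) a * (k 0 + 0 * deriv k 0)))) 0 := hin.pow 2
    have hdiv := hnum.div hdend (pow_ne_zero 2 hden20)
    have hVGeq : VG = fun w => (-Dc * (k w + w * deriv k w))
        / (((1:ℂ) - (starRingEnd ℂ) a * (w * k w))^2) := by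
      funext w
      rw [hVG_def]
    rw [hVGeq]
    refine hdiv.congr_deriv (Eq.symm ?_)
    have hd0 : ((1:ℂ) - (starRingEnd ℂ) a * ((0:ℂ) * k 0)) = 1 := by ring_nf
    rw [hd0]
    norm_num
    ring
  have hc2 : deriv (deriv g) 0 = -2*Dc*(deriv k 0 + (starRingEnd ℂ) a * (k 0)^2) := by
    have hev : deriv g =ᶠ[nhds (0:ℂ)] VG := by
      filter_upwards [isOpen_ball.mem_nhds h0] with w hw using (hgder w hw).deriv
    rw [hev.deriv_eq, hVGder.deriv]
  -- conclusion
  have hkSP := schwarz_pick_zero hdk hk_bound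
  have hone : (1:ℂ) - ((Complex.abs a:ℂ))^2 = Dc := by
    rw [absc_sq, hDc_def]
    ring
  have hLHS : (deriv (deriv g) 0 / 2) * (1 - ((Complex.abs a:ℂ))^2)
      + (deriv g 0)^2 * (starRingEnd ℂ) a = -(Dc^2) * deriv k 0 := by
    rw [hc1, hc2, hone]
    ring
  rw [hLHS, hc1]
  have e1 : Complex.abs (-(Dc^2) * deriv k 0)
      = (1 - Complex.abs a ^ 2)^2 * Complex.abs (deriv k 0) := by
    rw [map_mul, AbsoluteValue.map_neg, map_pow, hDc_abs]
  have e2 : Complex.abs (-Dc * k 0) = (1 - Complex.abs a ^ 2) * Complex.abs (k 0) := by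
    rw [map_mul, AbsoluteValue.map_neg, hDc_abs]
  rw [e1, e2]
  have hk0le : Complex.abs (k 0) ≤ 1 := hk_bound 0 h0
  nlinarith [Complex.abs.nonneg (k 0), Complex.abs.nonneg (deriv k 0), sq_nonneg (1 - Complex.abs a ^ 2)]


lemma hasDerivAt_inv_pow_sub {c z : ℂ} (m : ℕ) (h : c - z ≠ 0) :
    HasDerivAt (fun w => ((c - w)^m)⁻¹) (((c - z)^(m+1))⁻¹ * m) z := by
  have hid : HasDerivAt (fun w : ℂ => c - w) (-1) z := by
    simpa using (hasDerivAt_id z).const_sub c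
  have h1 : HasDerivAt (fun w => (c - w)^m) (↑m * (c - z)^(m-1) * (-1)) z :=
    (hasDerivAt_pow m (c - z)).comp z hid
  have h2 := h1.inv (pow_ne_zero m h)
  refine h2.congr_deriv (Eq.symm ?_)
  rcases Nat.eq_zero_or_pos m with hm | hm
  · subst hm; simp
  · have hexp : (c - z)^(m - 1) * (c - z)^(m + 1) = ((c - z)^m)^2 := by
      rw [← pow_add, ← pow_mul]
      congr 1
      omega
    field_simp
    rw [← hexp]
    ring

lemma norm_fstCLM_le : ‖(ContinuousLinearMap.fst ℂ ℂ ℂ)‖ ≤ 1 :=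
  ContinuousLinearMap.opNorm_le_bound _ zero_le_one (fun v => by
    simpa using norm_fst_le v)

lemma norm_sndCLM_le : ‖(ContinuousLinearMap.snd ℂ ℂ ℂ)‖ ≤ 1 :=
  ContinuousLinearMap.opNorm_le_bound _ zero_le_one (fun v => by
    simpa using norm_snd_le v)

/-- If `f` is holomorphic on an open set `s ⊆ ℂ²`, then its Fréchet derivative is
differentiable at every point of `s`. -/
lemma fderiv_differentiableAt {f : ℂ × ℂ → ℂ} {s : Set (ℂ × ℂ)} (hs : IsOpen s)
    (hf : DifferentiableOn ℂ f s) {p : ℂ × ℂ} (hp : p ∈ s) :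
    DifferentiableAt ℂ (fderiv ℂ f) p := by
  obtain ⟨R, hR, hRs⟩ : ∃ R > 0, closedBall p R ⊆ s :=
    (Metric.nhds_basis_closedBall.mem_iff).mp (hs.mem_nhds hp)
  -- basic setup
  set c1 : ℝ → ℂ := circleMap p.1 R with hc1_def
  set c2 : ℝ → ℂ := circleMap p.2 R with hc2_def
  have hin : ∀ (u v : ℂ), dist u p.1 ≤ R → dist v p.2 ≤ R → (u, v) ∈ s := by
    intro u v hu hv
    apply hRs
    rw [mem_closedBall, Prod.dist_eq]
    exact max_le hu hv
  have hc1R : ∀ θ, dist (c1 θ) p.1 ≤ R := fun θ => by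
    rw [hc1_def]; simpa using mem_closedBall.mp (sphere_subset_closedBall (circleMap_mem_sphere p.1 hR.le θ))
  have hc2R : ∀ θ, dist (c2 θ) p.2 ≤ R := fun θ => by
    rw [hc2_def]; simpa using mem_closedBall.mp (sphere_subset_closedBall (circleMap_mem_sphere p.2 hR.le θ))
  set A : ℝ × ℝ → ℂ := fun a =>
    (circleMap 0 R a.1 * I) * (circleMap 0 R a.2 * I) * f (c1 a.1, c2 a.2) with hA_def
  set μ : Measure (ℝ × ℝ) :=
    (volume.restrict (Ioc 0 (2*π))).prod (volume.restrict (Ioc 0 (2*π))) with hμ_def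
  haveI hfin1 : IsFiniteMeasure (volume.restrict (Ioc (0:ℝ) (2*π))) :=
    ⟨by rw [Measure.restrict_apply_univ]; exact measure_Ioc_lt_top⟩
  haveI hfinμ : IsFiniteMeasure μ := by rw [hμ_def]; infer_instance
  set K : ℕ → ℕ → (ℂ × ℂ) → ℝ × ℝ → ℂ := fun m n x a =>
    A a * (((c1 a.1 - x.1)^m)⁻¹ * ((c2 a.2 - x.2)^n)⁻¹) with hK_def
  -- continuity of A
  have hA_cont : Continuous A := by
    have hfc : Continuous (fun a : ℝ × ℝ => f (c1 a.1, c2 a.2)) := by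
      rw [continuous_iff_continuousAt]
      intro a
      have h1 : ContinuousAt f (c1 a.1, c2 a.2) :=
        hf.continuousOn.continuousAt (hs.mem_nhds (hin _ _ (hc1R a.1) (hc2R a.2)))
      have h2 : ContinuousAt (fun a : ℝ × ℝ => (c1 a.1, c2 a.2)) a := by
        rw [hc1_def, hc2_def]
        exact (((continuous_circleMap p.1 R).comp continuous_fst).prodMk
          ((continuous_circleMap p.2 R).comp continuous_snd)).continuousAt
      exact ContinuousAt.comp (f := fun a : ℝ × ℝ => (c1 a.1, c2 a.2)) (g := f) h1 h2
    exact ((((continuous_circleMap 0 R).comp continuous_fst).mul continuous_const).mul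
      (((continuous_circleMap 0 R).comp continuous_snd).mul continuous_const)).mul hfc
  -- bound on A
  obtain ⟨M, hM0, hM⟩ : ∃ M, 0 ≤ M ∧ ∀ a : ℝ × ℝ, ‖A a‖ ≤ M := by
    obtain ⟨C, hC⟩ := (isCompact_closedBall p R).exists_bound_of_continuousOn
      (hf.continuousOn.mono hRs)
    refine ⟨R * R * max C 0, by positivity, fun a => ?_⟩
    rw [hA_def]
    simp only [norm_mul, Complex.norm_eq_abs, abs_circleMap_zero, Complex.abs_I, mul_one]
    rw [abs_of_pos hR]
    have h1 : Complex.abs (f (c1 a.1, c2 a.2)) ≤ max C 0 := by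
      refine le_trans ?_ (le_max_left C 0)
      have := hC (c1 a.1, c2 a.2) (by rw [mem_closedBall, Prod.dist_eq]; exact max_le (hc1R a.1) (hc2R a.2))
      exact this
    calc R * R * Complex.abs (f (c1 a.1, c2 a.2)) ≤ R * R * max C 0 := by
          exact mul_le_mul_of_nonneg_left h1 (by positivity)
    _ = R * R * max C 0 := rfl
  -- lower bound on denominators
  have hden1 : ∀ (x : ℂ × ℂ), x ∈ ball p (3*R/4) → ∀ θ, R/4 ≤ ‖c1 θ - x.1‖ := by
    intro x hx θ
    have h1 : dist (c1 θ) p.1 = R := by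
      rw [hc1_def]; simpa using mem_sphere.mp (circleMap_mem_sphere p.1 hR.le θ)
    have h2 : dist x.1 p.1 ≤ dist x p := by rw [Prod.dist_eq]; exact le_max_left _ _
    have h3 : dist x p < 3*R/4 := mem_ball.mp hx
    have h4 := dist_triangle (c1 θ) x.1 p.1
    rw [← dist_eq_norm]
    linarith
  have hden2 : ∀ (x : ℂ × ℂ), x ∈ ball p (3*R/4) → ∀ θ, R/4 ≤ ‖c2 θ - x.2‖ := by
    intro x hx θ
    have h1 : dist (c2 θ) p.2 = R := by
      rw [hc2_def]; simpa using mem_sphere.mp (circleMap_mem_sphere p.2 hR.le θ)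
    have h2 : dist x.2 p.2 ≤ dist x p := by rw [Prod.dist_eq]; exact le_max_right _ _
    have h3 : dist x p < 3*R/4 := mem_ball.mp hx
    have h4 := dist_triangle (c2 θ) x.2 p.2
    rw [← dist_eq_norm]
    linarith
  have hden1ne : ∀ (x : ℂ × ℂ), x ∈ ball p (3*R/4) → ∀ θ, c1 θ - x.1 ≠ 0 := by
    intro x hx θ h0
    have := hden1 x hx θ
    rw [h0, norm_zero] at this
    linarith
  have hden2ne : ∀ (x : ℂ × ℂ), x ∈ ball p (3*R/4) → ∀ θ, c2 θ - x.2 ≠ 0 := by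
    intro x hx θ h0
    have := hden2 x hx θ
    rw [h0, norm_zero] at this
    linarith
  -- continuity of c1, c2
  have hc1_cont : Continuous c1 := by rw [hc1_def]; exact continuous_circleMap _ _
  have hc2_cont : Continuous c2 := by rw [hc2_def]; exact continuous_circleMap _ _
  set Fst := ContinuousLinearMap.fst ℂ ℂ ℂ with hFst_def
  set Snd := ContinuousLinearMap.snd ℂ ℂ ℂ with hSnd_def
  set D : ℕ → ℕ → (ℂ × ℂ) → ℝ × ℝ → (ℂ × ℂ) →L[ℂ] ℂ := fun m n x a =>
    (K (m+1) n x a * m) • Fst + (K m (n+1) x a * n) • Snd with hD_def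
  -- continuity of K in the parameter
  have hK_cont : ∀ (m n : ℕ) (x : ℂ × ℂ), x ∈ ball p (3*R/4) →
      Continuous (fun a => K m n x a) := by
    intro m n x hx
    rw [hK_def]
    refine hA_cont.mul (Continuous.mul ?_ ?_)
    · exact (((hc1_cont.comp continuous_fst).sub continuous_const).pow m).inv₀
        (fun a => pow_ne_zero m (hden1ne x hx a.1))
    · exact (((hc2_cont.comp continuous_snd).sub continuous_const).pow n).inv₀
        (fun a => pow_ne_zero n (hden2ne x hx a.2))
  -- bound on K
  have hK_bound : ∀ (m n : ℕ) (x : ℂ × ℂ), x ∈ ball p (3*R/4) → ∀ a,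
      ‖K m n x a‖ ≤ M * (((R/4)^m)⁻¹ * ((R/4)^n)⁻¹) := by
    intro m n x hx a
    rw [hK_def]
    simp only [norm_mul, norm_inv, norm_pow]
    have e1 := hden1 x hx a.1
    have e2 := hden2 x hx a.2
    have hR4 : (0:ℝ) < R/4 := by positivity
    gcongr
    exact hM a
  have hK_intble : ∀ (m n : ℕ) (x : ℂ × ℂ), x ∈ ball p (3*R/4) →
      Integrable (fun a => K m n x a) μ := by
    intro m n x hx
    exact (integrable_const (M * (((R/4)^m)⁻¹ * ((R/4)^n)⁻¹))).mono'
      (hK_cont m n x hx).aestronglyMeasurable (ae_of_all _ (hK_bound m n x hx))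
  -- continuity and integrability of D
  have hD_cont : ∀ (m n : ℕ) (x : ℂ × ℂ), x ∈ ball p (3*R/4) →
      Continuous (fun a => D m n x a) := by
    intro m n x hx
    rw [hD_def]
    exact (((hK_cont (m+1) n x hx).mul continuous_const).smul continuous_const).add
      (((hK_cont m (n+1) x hx).mul continuous_const).smul continuous_const)
  have hD_bound : ∀ (m n : ℕ) (x : ℂ × ℂ), x ∈ ball p (3*R/4) → ∀ a,
      ‖D m n x a‖ ≤ M * (((R/4)^(m+1))⁻¹ * ((R/4)^n)⁻¹) * m
        + M * (((R/4)^m)⁻¹ * ((R/4)^(n+1))⁻¹) * n := by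
    intro m n x hx a
    rw [hD_def]
    refine (norm_add_le _ _).trans ?_
    refine le_trans (add_le_add (ContinuousLinearMap.opNorm_smul_le _ _) (ContinuousLinearMap.opNorm_smul_le _ _)) ?_
    have h1 : ‖K (m+1) n x a * (m:ℂ)‖ ≤ M * (((R/4)^(m+1))⁻¹ * ((R/4)^n)⁻¹) * m := by
      rw [norm_mul]
      have : ‖(m:ℂ)‖ = (m:ℝ) := by
        rw [Complex.norm_natCast]
      rw [this]
      exact mul_le_mul_of_nonneg_right (hK_bound (m+1) n x hx a) (Nat.cast_nonneg m)
    have h2 : ‖K m (n+1) x a * (n:ℂ)‖ ≤ M * (((R/4)^m)⁻¹ * ((R/4)^(n+1))⁻¹) * n := by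
      rw [norm_mul]
      have : ‖(n:ℂ)‖ = (n:ℝ) := by
        rw [Complex.norm_natCast]
      rw [this]
      exact mul_le_mul_of_nonneg_right (hK_bound m (n+1) x hx a) (Nat.cast_nonneg n)
    have hb1 := norm_fstCLM_le
    have hb2 := norm_sndCLM_le
    rw [← hFst_def] at hb1
    rw [← hSnd_def] at hb2
    calc ‖K (m+1) n x a * (m:ℂ)‖ * ‖Fst‖ + ‖K m (n+1) x a * (n:ℂ)‖ * ‖Snd‖
        ≤ ‖K (m+1) n x a * (m:ℂ)‖ * 1 + ‖K m (n+1) x a * (n:ℂ)‖ * 1 :=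
          add_le_add (mul_le_mul_of_nonneg_left hb1 (norm_nonneg _))
            (mul_le_mul_of_nonneg_left hb2 (norm_nonneg _))
      _ = ‖K (m+1) n x a * (m:ℂ)‖ + ‖K m (n+1) x a * (n:ℂ)‖ := by ring
      _ ≤ _ := add_le_add h1 h2
  have hD_intble : ∀ (m n : ℕ) (x : ℂ × ℂ), x ∈ ball p (3*R/4) →
      Integrable (fun a => D m n x a) μ := by
    intro m n x hx
    exact (integrable_const _).mono' (hD_cont m n x hx).aestronglyMeasurable
      (ae_of_all _ (hD_bound m n x hx))
  -- pointwise differentiability of the kernel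
  have hKder : ∀ (m n : ℕ) (a : ℝ × ℝ) (x : ℂ × ℂ), x ∈ ball p (3*R/4) →
      HasFDerivAt (fun x => K m n x a) (D m n x a) x := by
    intro m n a x hx
    have h1 := hden1ne x hx a.1
    have h2 := hden2ne x hx a.2
    have hφ : HasDerivAt (fun z => ((c1 a.1 - z)^m)⁻¹) (((c1 a.1 - x.1)^(m+1))⁻¹ * m) x.1 :=
      hasDerivAt_inv_pow_sub m h1
    have hψ : HasDerivAt (fun z => ((c2 a.2 - z)^n)⁻¹) (((c2 a.2 - x.2)^(n+1))⁻¹ * n) x.2 :=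
      hasDerivAt_inv_pow_sub n h2
    have hφ2 := (hφ.hasFDerivAt).comp x (hasFDerivAt_fst (p := x))
    have hψ2 := (hψ.hasFDerivAt).comp x (hasFDerivAt_snd (p := x))
    have hmul := (hφ2.mul hψ2).const_mul (A a)
    refine hmul.congr_fderiv (Eq.symm ?_)
    refine ContinuousLinearMap.ext fun v => ?_
    rw [hD_def, hK_def]
    simp only [ContinuousLinearMap.add_apply, ContinuousLinearMap.smul_apply,
      ContinuousLinearMap.coe_smul', Pi.smul_apply, smul_eq_mul, hFst_def, hSnd_def,
      ContinuousLinearMap.coe_fst', ContinuousLinearMap.coe_snd',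
      ContinuousLinearMap.coe_comp', Function.comp_apply,
      ContinuousLinearMap.smulRight_apply, ContinuousLinearMap.one_apply,
      ContinuousLinearMap.toSpanSingleton_apply]
    ring
  -- the key : differentiability of the parametric integrals
  have key : ∀ (m n : ℕ) (x₀ : ℂ × ℂ), x₀ ∈ ball p (R/2) →
      HasFDerivAt (fun x => ∫ a, K m n x a ∂μ) (∫ a, D m n x₀ a ∂μ) x₀ := by
    intro m n x₀ hx₀
    have hR4 : (0:ℝ) < R/4 := by positivity
    have hball : ∀ x ∈ ball x₀ (R/4), x ∈ ball p (3*R/4) := by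
      intro x hx
      rw [mem_ball] at *
      have := dist_triangle x x₀ p
      linarith
    have hx₀3 : x₀ ∈ ball p (3*R/4) := by
      rw [mem_ball] at *
      linarith
    refine hasFDerivAt_integral_of_dominated_of_fderiv_le
      (bound := fun _ => M * (((R/4)^(m+1))⁻¹ * ((R/4)^n)⁻¹) * m
        + M * (((R/4)^m)⁻¹ * ((R/4)^(n+1))⁻¹) * n)
      (ball_mem_nhds x₀ hR4) ?_ (hK_intble m n x₀ hx₀3) ?_ ?_ ?_ ?_
    · filter_upwards [ball_mem_nhds x₀ hR4] with x hx using
        (hK_cont m n x (hball x hx)).aestronglyMeasurable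
    · exact (hD_cont m n x₀ hx₀3).aestronglyMeasurable
    · exact ae_of_all _ (fun a x hx => hD_bound m n x (hball x hx) a)
    · exact integrable_const _
    · exact ae_of_all _ (fun a x hx => hKder m n a x (hball x hx))
  -- Cauchy double integral formula
  have h34 : (0:ℝ) < 3*R/4 := by positivity
  have hCauchy : ∀ x ∈ ball p (3*R/4), ∫ a, K 1 1 x a ∂μ = (2*π*I) * ((2*π*I) * f x) := by
    intro x hx
    have hx1 : x.1 ∈ ball p.1 R := by
      rw [mem_ball]
      have h2 : dist x.1 p.1 ≤ dist x p := by rw [Prod.dist_eq]; exact le_max_left _ _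
      have h3 : dist x p < 3*R/4 := mem_ball.mp hx
      linarith
    have hx2 : x.2 ∈ ball p.2 R := by
      rw [mem_ball]
      have h2 : dist x.2 p.2 ≤ dist x p := by rw [Prod.dist_eq]; exact le_max_right _ _
      have h3 : dist x p < 3*R/4 := mem_ball.mp hx
      linarith
    have hint := hK_intble 1 1 x hx
    rw [hμ_def] at hint
    have h2π : (0:ℝ) ≤ 2*π := by positivity
    calc ∫ a, K 1 1 x a ∂μ
        = ∫ θ, (∫ φ, K 1 1 x (θ, φ) ∂(volume.restrict (Ioc 0 (2*π))))
            ∂(volume.restrict (Ioc 0 (2*π))) := by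
          rw [hμ_def]
          exact MeasureTheory.integral_prod _ hint
      _ = ∫ θ, (circleMap 0 R θ * I * (c1 θ - x.1)⁻¹) * ((2*π*I) * f (c1 θ, x.2))
            ∂(volume.restrict (Ioc 0 (2*π))) := by
          apply MeasureTheory.integral_congr_ae
          apply ae_of_all
          intro θ
          have hslice : DiffContOnCl ℂ (fun w => f (c1 θ, w)) (ball p.2 R) := by
            apply DifferentiableOn.diffContOnCl
            rw [closure_ball p.2 hR.ne']
            intro w hw
            have hws : (c1 θ, w) ∈ s := hin _ _ (hc1R θ) (mem_closedBall.mp hw)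
            exact ((hf.differentiableAt (hs.mem_nhds hws)).comp w
              ((differentiableAt_const _).prodMk differentiableAt_id)).differentiableWithinAt
          have hC := hslice.circleIntegral_sub_inv_smul hx2
          beta_reduce
          rw [← intervalIntegral.integral_of_le h2π]
          have hInt : EqOn (fun φ => K 1 1 x (θ, φ))
              (fun φ => (circleMap 0 R θ * I * (c1 θ - x.1)⁻¹) *
                (deriv (circleMap p.2 R) φ • ((circleMap p.2 R φ - x.2)⁻¹ • f (c1 θ, circleMap p.2 R φ))))
              (Set.uIcc 0 (2*π)) := by
            intro φ _
            simp only [hK_def, hA_def, deriv_circleMap, smul_eq_mul, pow_one, hc2_def]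
            ring
          rw [intervalIntegral.integral_congr hInt, intervalIntegral.integral_const_mul]
          have : (∫ φ in (0:ℝ)..(2*π), deriv (circleMap p.2 R) φ •
              ((circleMap p.2 R φ - x.2)⁻¹ • f (c1 θ, circleMap p.2 R φ)))
              = ∮ z in C(p.2, R), (z - x.2)⁻¹ • f (c1 θ, z) := rfl
          rw [this, hC, smul_eq_mul]
      _ = (2*π*I) * ((2*π*I) * f x) := by
          have hslice : DiffContOnCl ℂ (fun u => f (u, x.2)) (ball p.1 R) := by
            apply DifferentiableOn.diffContOnCl
            rw [closure_ball p.1 hR.ne']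
            intro w hw
            have hws : (w, x.2) ∈ s := hin _ _ (mem_closedBall.mp hw)
              (le_trans (le_of_lt (mem_ball.mp hx2)) le_rfl)
            exact ((hf.differentiableAt (hs.mem_nhds hws)).comp w
              (differentiableAt_id.prodMk (differentiableAt_const _))).differentiableWithinAt
          have hC := hslice.circleIntegral_sub_inv_smul hx1
          rw [← intervalIntegral.integral_of_le h2π]
          have hInt : EqOn (fun θ => (circleMap 0 R θ * I * (c1 θ - x.1)⁻¹) *
                ((2*π*I) * f (c1 θ, x.2)))
              (fun θ => (2*π*I) * (deriv (circleMap p.1 R) θ •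
                ((circleMap p.1 R θ - x.1)⁻¹ • f (circleMap p.1 R θ, x.2))))
              (Set.uIcc 0 (2*π)) := by
            intro θ _
            simp only [deriv_circleMap, smul_eq_mul, hc1_def]
            ring
          rw [intervalIntegral.integral_congr hInt, intervalIntegral.integral_const_mul]
          have : (∫ θ in (0:ℝ)..(2*π), deriv (circleMap p.1 R) θ •
              ((circleMap p.1 R θ - x.1)⁻¹ • f (circleMap p.1 R θ, x.2)))
              = ∮ z in C(p.1, R), (z - x.1)⁻¹ • f (z, x.2) := rfl
          rw [this, hC, smul_eq_mul]
  -- conclusion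
  have hc0 : ((2*(π:ℂ)*I) * (2*π*I)) ≠ 0 := by
    simp [Real.pi_ne_zero, Complex.I_ne_zero, Complex.ofReal_ne_zero]
  set u1 : (ℂ × ℂ) → ℂ := fun x => ((2*(π:ℂ)*I) * (2*π*I))⁻¹ * ∫ a, K 2 1 x a ∂μ with hu1_def
  set u2 : (ℂ × ℂ) → ℂ := fun x => ((2*(π:ℂ)*I) * (2*π*I))⁻¹ * ∫ a, K 1 2 x a ∂μ with hu2_def
  have hR2 : (0:ℝ) < R/2 := by positivity
  have hball23 : ∀ x ∈ ball p (R/2), x ∈ ball p (3*R/4) := fun x hx => by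
    rw [mem_ball] at *; linarith
  have hfd : ∀ x₀ ∈ ball p (R/2), fderiv ℂ f x₀ = u1 x₀ • Fst + u2 x₀ • Snd := by
    intro x₀ hx₀
    have hx₀3 : x₀ ∈ ball p (3*R/4) := hball23 x₀ hx₀
    have hJ := key 1 1 x₀ hx₀
    have hfx : HasFDerivAt f (((2*(π:ℂ)*I) * (2*π*I))⁻¹ • ∫ a, D 1 1 x₀ a ∂μ) x₀ := by
      have h1 := hJ.const_mul (((2*(π:ℂ)*I) * (2*π*I))⁻¹)
      refine h1.congr_of_eventuallyEq ?_
      filter_upwards [isOpen_ball.mem_nhds hx₀3] with x hx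
      rw [hCauchy x hx]
      field_simp
    rw [hfx.fderiv]
    refine ContinuousLinearMap.ext fun v => ?_
    have hDint := hD_intble 1 1 x₀ hx₀3
    rw [ContinuousLinearMap.smul_apply, ContinuousLinearMap.integral_apply hDint]
    have hptw : ∀ a : ℝ × ℝ, (D 1 1 x₀ a) v = (K 2 1 x₀ a) • v.1 + (K 1 2 x₀ a) • v.2 := by
      intro a
      rw [hD_def]
      simp only [ContinuousLinearMap.add_apply, ContinuousLinearMap.smul_apply, hFst_def,
        hSnd_def, ContinuousLinearMap.coe_fst', ContinuousLinearMap.coe_snd', smul_eq_mul]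
      push_cast
      ring
    rw [MeasureTheory.integral_congr_ae (ae_of_all _ hptw)]
    rw [integral_add ((hK_intble 2 1 x₀ hx₀3).smul_const v.1) ((hK_intble 1 2 x₀ hx₀3).smul_const v.2)]
    rw [_root_.integral_smul_const, _root_.integral_smul_const]
    rw [ContinuousLinearMap.add_apply, ContinuousLinearMap.smul_apply,
      ContinuousLinearMap.smul_apply, hu1_def, hu2_def]
    simp only [hFst_def, hSnd_def, ContinuousLinearMap.coe_fst', ContinuousLinearMap.coe_snd',
      smul_eq_mul]
    ring
  have hp2 : p ∈ ball p (R/2) := mem_ball_self hR2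
  have hu1d : DifferentiableAt ℂ u1 p := by
    rw [hu1_def]
    exact ((key 2 1 p hp2).differentiableAt.const_mul _)
  have hu2d : DifferentiableAt ℂ u2 p := by
    rw [hu2_def]
    exact ((key 1 2 p hp2).differentiableAt.const_mul _)
  have hfinal : DifferentiableAt ℂ (fun x => u1 x • Fst + u2 x • Snd) p :=
    (hu1d.smul_const Fst).add (hu2d.smul_const Snd)
  refine hfinal.congr_of_eventuallyEq ?_
  filter_upwards [isOpen_ball.mem_nhds hp2] with x hx using hfd x hx


-- the Möbius curve parametrization
def mphi (a : ℂ) (z : ℂ) : ℂ := (z + a) / (1 + (starRingEnd ℂ) a * z)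
def mpsi (a : ℂ) (z : ℂ) : ℂ := (1 - (starRingEnd ℂ) a * a) / (1 + (starRingEnd ℂ) a * z)^2

lemma mphi_def (a z : ℂ) : mphi a z = (z + a) / (1 + (starRingEnd ℂ) a * z) := rfl

lemma mphi_den_ne {a z : ℂ} (ha : Complex.abs a < 1) (hz : Complex.abs z < 1) :
    (1 : ℂ) + (starRingEnd ℂ) a * z ≠ 0 := by
  intro h0
  have h : Complex.abs ((starRingEnd ℂ) a * z) < 1 := by
    rw [map_mul]
    calc Complex.abs ((starRingEnd ℂ) a) * Complex.abs z
        ≤ Complex.abs ((starRingEnd ℂ) a) * 1 :=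
          mul_le_mul_of_nonneg_left hz.le (Complex.abs.nonneg _)
      _ = Complex.abs a := by rw [mul_one, Complex.abs_conj]
      _ < 1 := ha
  have : (starRingEnd ℂ) a * z = -1 := by linear_combination h0
  rw [this] at h
  simp at h
lemma mphi_zero (a : ℂ) : mphi a 0 = a := by simp [mphi]

lemma mphi_lt_one {a z : ℂ} (ha : Complex.abs a < 1) (hz : Complex.abs z < 1) :
    Complex.abs (mphi a z) < 1 := by
  rw [mphi, map_div₀]
  have h := mobius_sq_diff a z
  have h1 : (0:ℝ) < 1 - Complex.abs a ^ 2 := by nlinarith [Complex.abs.nonneg a]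
  have h2 : (0:ℝ) < 1 - Complex.abs z ^ 2 := by nlinarith [Complex.abs.nonneg z]
  have h3 : Complex.abs (z + a) < Complex.abs (1 + (starRingEnd ℂ) a * z) := by
    by_contra hc
    push_neg at hc
    have := pow_le_pow_left₀ (Complex.abs.nonneg _) hc 2
    nlinarith [mul_pos h1 h2]
  rw [div_lt_one (lt_of_le_of_lt (Complex.abs.nonneg _) h3)]
  exact h3

lemma mphi_hasDerivAt {a z : ℂ} (ha : Complex.abs a < 1) (hz : Complex.abs z < 1) :
    HasDerivAt (mphi a) (mpsi a z) z := by
  have hne := mphi_den_ne ha hz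
  have hnum : HasDerivAt (fun w : ℂ => w + a) 1 z := by
    simpa using (hasDerivAt_id z).add_const a
  have hden : HasDerivAt (fun w : ℂ => (1:ℂ) + (starRingEnd ℂ) a * w) ((starRingEnd ℂ) a) z := by
    simpa using ((hasDerivAt_id z).const_mul ((starRingEnd ℂ) a)).const_add (1:ℂ)
  have h := hnum.div hden hne
  have heq : mphi a = fun w => (w + a) / (1 + (starRingEnd ℂ) a * w) := rfl
  rw [heq]
  refine h.congr_deriv (Eq.symm ?_)
  rw [mpsi]
  rw [div_eq_div_iff (pow_ne_zero 2 hne) (pow_ne_zero 2 hne)]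
  ring

lemma mpsi_zero (a : ℂ) : mpsi a 0 = 1 - (starRingEnd ℂ) a * a := by simp [mpsi]

lemma mpsi_hasDerivAt {a : ℂ} (ha : Complex.abs a < 1) :
    HasDerivAt (mpsi a) (-2 * (starRingEnd ℂ) a * (1 - (starRingEnd ℂ) a * a)) 0 := by
  have hne : (1:ℂ) + (starRingEnd ℂ) a * 0 ≠ 0 := by simpa using mphi_den_ne ha (by simp : Complex.abs 0 < 1)
  have hin : HasDerivAt (fun w : ℂ => (1:ℂ) + (starRingEnd ℂ) a * w) ((starRingEnd ℂ) a) 0 := by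
    simpa using ((hasDerivAt_id (0:ℂ)).const_mul ((starRingEnd ℂ) a)).const_add (1:ℂ)
  have hden : HasDerivAt (fun w : ℂ => ((1:ℂ) + (starRingEnd ℂ) a * w)^2)
      (↑2 * ((1:ℂ) + (starRingEnd ℂ) a * 0)^(2-1) * (starRingEnd ℂ) a) 0 := hin.pow 2
  have hnum : HasDerivAt (fun _ : ℂ => (1:ℂ) - (starRingEnd ℂ) a * a) 0 0 := hasDerivAt_const _ _
  have h := hnum.div hden (pow_ne_zero 2 hne)
  have heq : mpsi a = fun w => ((1:ℂ) - (starRingEnd ℂ) a * a) / ((1 + (starRingEnd ℂ) a * w)^2) := rfl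
  rw [heq]
  refine h.congr_deriv (Eq.symm ?_)
  simp only [mul_zero, add_zero, one_pow, pow_succ, pow_zero, one_mul, zero_mul]
  norm_num
  ring

-- the polynomial identity for the distinguished variety
lemma q_identity (o1 o2 z : ℂ) :
    (Complex.abs ((1 - (starRingEnd ℂ) o2 * o1) + ((starRingEnd ℂ) o2 - (starRingEnd ℂ) o1) * z))^2
      - (Complex.abs ((o2 - o1) + (1 - o2 * (starRingEnd ℂ) o1) * z))^2
    = (1 - Complex.abs o1 ^ 2) * (1 - Complex.abs o2 ^ 2) * (1 - Complex.abs z ^ 2) := by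
  apply Complex.ofReal_injective
  push_cast
  rw [absc_sq, absc_sq, absc_sq, absc_sq, absc_sq]
  simp only [map_add, map_sub, map_mul, map_one, Complex.conj_conj]
  ring

lemma Dq_ne {o1 o2 z : ℂ} (h1 : Complex.abs o1 < 1) (h2 : Complex.abs o2 < 1)
    (hz : Complex.abs z ≤ 1) :
    (1 - (starRingEnd ℂ) o2 * o1) + ((starRingEnd ℂ) o2 - (starRingEnd ℂ) o1) * z ≠ 0 := by
  have hrw : (1 - (starRingEnd ℂ) o2 * o1) + ((starRingEnd ℂ) o2 - (starRingEnd ℂ) o1) * z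
      = (1 - (starRingEnd ℂ) o1 * z) + (starRingEnd ℂ) o2 * (z - o1) := by ring
  rw [hrw]
  have hA : (0:ℝ) < Complex.abs (1 - (starRingEnd ℂ) o1 * z) := by
    rcases eq_or_lt_of_le (Complex.abs.nonneg (1 - (starRingEnd ℂ) o1 * z)) with h | h
    · exfalso
      have h0 : (1:ℂ) - (starRingEnd ℂ) o1 * z = 0 := by
        have := Complex.abs.eq_zero.mp h.symm
        exact this
      have : Complex.abs ((starRingEnd ℂ) o1 * z) = 1 := by
        have : (starRingEnd ℂ) o1 * z = 1 := by linear_combination -h0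
        rw [this, map_one]
      rw [map_mul, Complex.abs_conj] at this
      nlinarith [Complex.abs.nonneg o1, Complex.abs.nonneg z]
    · exact h
  have hB : Complex.abs ((starRingEnd ℂ) o2 * (z - o1)) <
      Complex.abs (1 - (starRingEnd ℂ) o1 * z) := by
    rw [map_mul, Complex.abs_conj]
    have hle : Complex.abs (z - o1) ≤ Complex.abs (1 - (starRingEnd ℂ) o1 * z) := by
      have h := mobius_sq_diff' o1 z
      have h1' : (0:ℝ) ≤ 1 - Complex.abs o1 ^ 2 := by nlinarith [Complex.abs.nonneg o1]
      have h2' : (0:ℝ) ≤ 1 - Complex.abs z ^ 2 := by nlinarith [Complex.abs.nonneg z]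
      have h3 : Complex.abs (z - o1) = Complex.abs (o1 - z) := by
        rw [← AbsoluteValue.map_neg Complex.abs]
        congr 1
        ring
      rw [h3]
      nlinarith [Complex.abs.nonneg (o1 - z), Complex.abs.nonneg (1 - (starRingEnd ℂ) o1 * z),
        mul_nonneg h1' h2']
    calc Complex.abs o2 * Complex.abs (z - o1)
        ≤ Complex.abs o2 * Complex.abs (1 - (starRingEnd ℂ) o1 * z) :=
          mul_le_mul_of_nonneg_left hle (Complex.abs.nonneg _)
      _ < 1 * Complex.abs (1 - (starRingEnd ℂ) o1 * z) := by
          exact mul_lt_mul_of_pos_right h2 hA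
      _ = Complex.abs (1 - (starRingEnd ℂ) o1 * z) := one_mul _
  intro h0
  have : Complex.abs ((starRingEnd ℂ) o2 * (z - o1)) = Complex.abs (1 - (starRingEnd ℂ) o1 * z) := by
    have h1' : (starRingEnd ℂ) o2 * (z - o1) = -(1 - (starRingEnd ℂ) o1 * z) := by
      linear_combination h0
    rw [h1', AbsoluteValue.map_neg]
  rw [this] at hB
  exact lt_irrefl _ hB


/-- **A second-order Schwarz–Pick inequality on a distinguished variety of the bidisk.** -/
theorem schwarz_pick_distinguished_variety_second_order (ω : ℂ × ℂ) (hω : ω ∈ openBidisk) :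
    ∃ q : MvPolynomial (Fin 2) ℂ,
      (zeroSet q ∩ openBidisk).Nonempty ∧
      closure (zeroSet q ∩ openBidisk) ∩ frontier openBidisk ⊆ torus ∧
      ∀ f : ℂ × ℂ → ℂ, ContinuousOn f closedBidisk → DifferentiableOn ℂ f openBidisk →
        (∀ z ∈ zeroSet q ∩ openBidisk, ‖f z‖ ≤ 1) →
        ∀ (α β : Fin 2 → ℂ) (γ₁ γ₂ : ℂ),
          α 0 = 1 - (‖ω.1‖ : ℂ) ^ 2 →
          α 1 = 1 - (‖ω.2‖ : ℂ) ^ 2 →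
          β 0 = -(starRingEnd ℂ) ω.1 * (1 - (‖ω.1‖ : ℂ) ^ 2) →
          β 1 = -(starRingEnd ℂ) ω.2 * (1 - (‖ω.2‖ : ℂ) ^ 2) →
          γ₁ = α 0 * fderiv ℂ f ω (e 0) + α 1 * fderiv ℂ f ω (e 1) →
          γ₂ = (1 / 2) *
              (∑ j : Fin 2, ∑ k : Fin 2,
                α j * α k * fderiv ℂ (fderiv ℂ f) ω (e j) (e k)) +
            β 0 * fderiv ℂ f ω (e 0) + β 1 * fderiv ℂ f ω (e 1) →
          ‖γ₂ * ((1 : ℂ) - (‖f ω‖ : ℂ) ^ 2) +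
              γ₁ ^ 2 * (starRingEnd ℂ) (f ω)‖ ≤
            (1 - ‖f ω‖ ^ 2) ^ 2 - ‖γ₁‖ ^ 2 := by
  have hω1 : Complex.abs ω.1 < 1 := hω.1
  have hω2 : Complex.abs ω.2 < 1 := hω.2
  have hopen : IsOpen openBidisk := by
    have h : openBidisk = {z : ℂ × ℂ | Complex.abs z.1 < 1} ∩ {z | Complex.abs z.2 < 1} := rfl
    rw [h]
    exact (isOpen_lt (Complex.continuous_abs.comp continuous_fst) continuous_const).inter
      (isOpen_lt (Complex.continuous_abs.comp continuous_snd) continuous_const)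
  set d0 : ℂ := 1 - (starRingEnd ℂ) ω.2 * ω.1 with hd0
  set d1 : ℂ := (starRingEnd ℂ) ω.2 - (starRingEnd ℂ) ω.1 with hd1
  set n0 : ℂ := ω.2 - ω.1 with hn0
  set n1 : ℂ := 1 - ω.2 * (starRingEnd ℂ) ω.1 with hn1
  set qq : MvPolynomial (Fin 2) ℂ :=
    (MvPolynomial.C d0 + MvPolynomial.C d1 * MvPolynomial.X 0) * MvPolynomial.X 1
      - (MvPolynomial.C n0 + MvPolynomial.C n1 * MvPolynomial.X 0) with hqq
  have heval : ∀ z w : ℂ, MvPolynomial.eval ![z, w] qq = (d0 + d1 * z) * w - (n0 + n1 * z) := by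
    intro z w
    rw [hqq]
    simp [Matrix.cons_val_zero, Matrix.cons_val_one, Matrix.head_cons]
  have hzs : ∀ x : ℂ × ℂ, x ∈ zeroSet qq ↔ (d0 + d1 * x.1) * x.2 = n0 + n1 * x.1 := by
    intro x
    rw [zeroSet, mem_setOf_eq, heval x.1 x.2, sub_eq_zero]
  refine ⟨qq, ⟨ω, (hzs ω).mpr (by rw [hd0, hd1, hn0, hn1]; ring), hω⟩, ?_, ?_⟩
  · -- boundary condition
    intro x hx
    have hzc : IsClosed (zeroSet qq) := by
      have h : zeroSet qq = (fun y : ℂ × ℂ => (d0 + d1 * y.1) * y.2 - (n0 + n1 * y.1)) ⁻¹' {0} := by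
        ext y
        rw [mem_preimage, mem_singleton_iff, zeroSet, mem_setOf_eq, heval y.1 y.2]
      rw [h]
      exact IsClosed.preimage (by fun_prop) isClosed_singleton
    have hcc : IsClosed closedBidisk := by
      have h : closedBidisk = {z : ℂ × ℂ | Complex.abs z.1 ≤ 1} ∩ {z | Complex.abs z.2 ≤ 1} := rfl
      rw [h]
      exact (isClosed_le (Complex.continuous_abs.comp continuous_fst) continuous_const).inter
        (isClosed_le (Complex.continuous_abs.comp continuous_snd) continuous_const)
    have hsub : closure (zeroSet qq ∩ openBidisk) ⊆ zeroSet qq ∩ closedBidisk := by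
      apply closure_minimal
      · exact inter_subset_inter (subset_refl _) (fun y hy => ⟨hy.1.le, hy.2.le⟩)
      · exact hzc.inter hcc
    obtain ⟨hxz, hxc⟩ := hsub hx.1
    have hnotin : x ∉ openBidisk := fun hmem => hx.2.2 (by rw [hopen.interior_eq]; exact hmem)
    have heq2 : (d0 + d1 * x.1) * x.2 = n0 + n1 * x.1 := (hzs x).mp hxz
    have hx1 : Complex.abs x.1 ≤ 1 := hxc.1
    have hx2 : Complex.abs x.2 ≤ 1 := hxc.2
    have hDne : d0 + d1 * x.1 ≠ 0 := by rw [hd0, hd1]; exact Dq_ne hω1 hω2 hx1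
    have hiden := q_identity ω.1 ω.2 x.1
    rw [← hd0, ← hd1, ← hn0, ← hn1] at hiden
    have habs2 : Complex.abs (n0 + n1 * x.1) = Complex.abs (d0 + d1 * x.1) * Complex.abs x.2 := by
      rw [← heq2, map_mul]
    have hDpos : 0 < Complex.abs (d0 + d1 * x.1) := Complex.abs.pos hDne
    have hkey : (Complex.abs (d0 + d1 * x.1))^2 * (1 - Complex.abs x.2 ^ 2)
        = (1 - Complex.abs ω.1 ^ 2) * (1 - Complex.abs ω.2 ^ 2) * (1 - Complex.abs x.1 ^ 2) := by
      rw [← hiden, habs2]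
      ring
    have hp1 : (0:ℝ) < 1 - Complex.abs ω.1 ^ 2 := by nlinarith [Complex.abs.nonneg ω.1]
    have hp2 : (0:ℝ) < 1 - Complex.abs ω.2 ^ 2 := by nlinarith [Complex.abs.nonneg ω.2]
    have hcase : Complex.abs x.1 = 1 ∨ Complex.abs x.2 = 1 := by
      by_contra hc
      push_neg at hc
      exact hnotin ⟨lt_of_le_of_ne hx1 hc.1, lt_of_le_of_ne hx2 hc.2⟩
    have habs_eq_one : ∀ t : ℝ, 0 ≤ t → t^2 = 1 → t = 1 := by
      intro t ht h1
      have : (t - 1) * (t + 1) = 0 := by nlinarith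
      rcases mul_eq_zero.mp this with h | h
      · linarith
      · linarith
    rcases hcase with h | h
    · have h2 : Complex.abs x.2 ^ 2 = 1 := by
        have hz : (1:ℝ) - Complex.abs x.1 ^ 2 = 0 := by rw [h]; norm_num
        rw [hz, mul_zero] at hkey
        have := mul_eq_zero.mp hkey
        rcases this with h' | h'
        · exact absurd h' (by positivity)
        · linarith
      exact ⟨h, habs_eq_one _ (Complex.abs.nonneg _) h2⟩
    · have h1 : Complex.abs x.1 ^ 2 = 1 := by
        have hz : (1:ℝ) - Complex.abs x.2 ^ 2 = 0 := by rw [h]; norm_num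
        rw [hz, mul_zero] at hkey
        have h3 : (1:ℝ) - Complex.abs x.1 ^ 2 = 0 := by
          by_contra hne
          have := mul_ne_zero (mul_ne_zero (ne_of_gt hp1) (ne_of_gt hp2)) hne
          exact this hkey.symm
        linarith
      exact ⟨habs_eq_one _ (Complex.abs.nonneg _) h1, h⟩
  · -- the main inequality
    intro f hfc hfd hfb α β γ₁ γ₂ hα0 hα1 hβ0 hβ1 hγ₁ hγ₂
    set Φ : ℂ → ℂ × ℂ := fun z => (mphi ω.1 z, mphi ω.2 z) with hΦ_def
    have hΦ0 : Φ 0 = ω := by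
      rw [hΦ_def]
      simp only [mphi_zero]
    have hΦmem : ∀ z : ℂ, Complex.abs z < 1 → Φ z ∈ zeroSet qq ∩ openBidisk := by
      intro z hz
      constructor
      · rw [hzs]
        have he1 := mphi_den_ne hω1 hz
        have he2 := mphi_den_ne hω2 hz
        rw [hΦ_def]
        simp only [mphi_def]
        rw [hd0, hd1, hn0, hn1]
        field_simp
        ring
      · exact ⟨mphi_lt_one hω1 hz, mphi_lt_one hω2 hz⟩
    have hΦder : ∀ z : ℂ, Complex.abs z < 1 →
        HasDerivAt Φ (mpsi ω.1 z, mpsi ω.2 z) z := fun z hz =>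
      (mphi_hasDerivAt hω1 hz).prodMk (mphi_hasDerivAt hω2 hz)
    set g : ℂ → ℂ := fun z => f (Φ z) with hg_def
    have hmb : ∀ z : ℂ, z ∈ ball (0:ℂ) 1 → Complex.abs z < 1 := fun z hz => by
      rw [mem_ball, dist_zero_right, Complex.norm_eq_abs] at hz
      exact hz
    have hgder : ∀ z : ℂ, Complex.abs z < 1 →
        HasDerivAt g (fderiv ℂ f (Φ z) (mpsi ω.1 z, mpsi ω.2 z)) z := by
      intro z hz
      have hfΦ : HasFDerivAt f (fderiv ℂ f (Φ z)) (Φ z) :=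
        (hfd.differentiableAt (hopen.mem_nhds (hΦmem z hz).2)).hasFDerivAt
      exact hfΦ.comp_hasDerivAt z (hΦder z hz)
    have hgd : DifferentiableOn ℂ g (ball (0:ℂ) 1) := fun z hz =>
      ((hgder z (hmb z hz)).differentiableAt).differentiableWithinAt
    have hgb : ∀ z ∈ ball (0:ℂ) 1, Complex.abs (g z) ≤ 1 := fun z hz =>
      hfb _ (hΦmem z (hmb z hz))
    have main := schur_second_order hgd hgb
    have hg0 : g 0 = f ω := by rw [hg_def]; simp only; rw [hΦ0]
    have h0lt : Complex.abs (0:ℂ) < 1 := by simp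
    have hlin : ∀ (T : (ℂ × ℂ) →L[ℂ] ℂ) (a b : ℂ), T (a, b) = a * T (1, 0) + b * T (0, 1) := by
      intro T a b
      have hv : ((a, b) : ℂ × ℂ) = a • ((1:ℂ), (0:ℂ)) + b • ((0:ℂ), (1:ℂ)) := by
        simp [Prod.ext_iff]
      rw [hv, map_add, _root_.map_smul, _root_.map_smul, smul_eq_mul, smul_eq_mul]
    have he0 : e 0 = ((1:ℂ), (0:ℂ)) := rfl
    have he1' : e 1 = ((0:ℂ), (1:ℂ)) := rfl
    have habsA : ((‖ω.1‖ : ℂ))^2 = (starRingEnd ℂ) ω.1 * ω.1 := by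
      rw [mul_comm]; exact absc_sq ω.1
    have habsB : ((‖ω.2‖ : ℂ))^2 = (starRingEnd ℂ) ω.2 * ω.2 := by
      rw [mul_comm]; exact absc_sq ω.2
    have hc1 : deriv g 0 = γ₁ := by
      rw [(hgder 0 h0lt).deriv, hΦ0, mpsi_zero, mpsi_zero, hγ₁, hα0, hα1, he0, he1',
        habsA, habsB]
      exact hlin _ _ _
    have hffd : DifferentiableAt ℂ (fderiv ℂ f) ω := fderiv_differentiableAt hopen hfd hω
    have hcd : HasDerivAt (fun z => fderiv ℂ f (Φ z))
        (fderiv ℂ (fderiv ℂ f) ω (mpsi ω.1 0, mpsi ω.2 0)) 0 := by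
      have h1 : HasFDerivAt (fderiv ℂ f) (fderiv ℂ (fderiv ℂ f) ω) (Φ 0) := by
        rw [hΦ0]
        exact hffd.hasFDerivAt
      exact h1.comp_hasDerivAt 0 (hΦder 0 h0lt)
    have hud : HasDerivAt (fun z => ((mpsi ω.1 z, mpsi ω.2 z) : ℂ × ℂ))
        (-2 * (starRingEnd ℂ) ω.1 * (1 - (starRingEnd ℂ) ω.1 * ω.1),
         -2 * (starRingEnd ℂ) ω.2 * (1 - (starRingEnd ℂ) ω.2 * ω.2)) 0 :=
      (mpsi_hasDerivAt hω1).prodMk (mpsi_hasDerivAt hω2)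
    have hGder := hcd.clm_apply hud
    have hdg : deriv (deriv g) 0
        = fderiv ℂ (fderiv ℂ f) ω (mpsi ω.1 0, mpsi ω.2 0) (mpsi ω.1 0, mpsi ω.2 0)
          + (fderiv ℂ f (Φ 0))
            (-2 * (starRingEnd ℂ) ω.1 * (1 - (starRingEnd ℂ) ω.1 * ω.1),
             -2 * (starRingEnd ℂ) ω.2 * (1 - (starRingEnd ℂ) ω.2 * ω.2)) := by
      have hev : deriv g =ᶠ[nhds (0:ℂ)]
          fun z => fderiv ℂ f (Φ z) (mpsi ω.1 z, mpsi ω.2 z) := by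
        filter_upwards [isOpen_ball.mem_nhds (mem_ball_self one_pos)] with z hz using
          (hgder z (hmb z hz)).deriv
      rw [hev.deriv_eq, hGder.deriv]
    have hbil : ∀ (a b : ℂ), fderiv ℂ (fderiv ℂ f) ω (a, b)
        = a • fderiv ℂ (fderiv ℂ f) ω (1, 0) + b • fderiv ℂ (fderiv ℂ f) ω (0, 1) := by
      intro a b
      have hv : ((a, b) : ℂ × ℂ) = a • ((1:ℂ), (0:ℂ)) + b • ((0:ℂ), (1:ℂ)) := by
        simp [Prod.ext_iff]
      rw [hv, map_add, _root_.map_smul, _root_.map_smul]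
    have hc2 : deriv (deriv g) 0 = 2 * γ₂ := by
      rw [hdg, hΦ0, mpsi_zero, mpsi_zero, hγ₂, Fin.sum_univ_two, Fin.sum_univ_two,
        Fin.sum_univ_two, hα0, hα1, hβ0, hβ1, he0, he1']
      rw [hbil, hlin (fderiv ℂ f ω)]
      simp only [ContinuousLinearMap.add_apply, ContinuousLinearMap.smul_apply, smul_eq_mul]
      rw [hlin (fderiv ℂ (fderiv ℂ f) ω (1, 0)), hlin (fderiv ℂ (fderiv ℂ f) ω (0, 1)),
        habsA, habsB]
      ring
    rw [hg0, hc1, hc2] at main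
    have h22 : (2 * γ₂) / 2 = γ₂ := by ring
    rw [h22] at main
    exact main


end
end

section
/- Let f : ℂ → ℂ be holomorphic on the open unit disk 𝔻 with |f(z)| ≤ 1 for all z ∈ 𝔻 and f(0) = 0, and let a_m denote the m-th Taylor coefficient of f at 0. Then for all integers n ≥ 1 and k ≥ 1: |a_{n+k}| ≤ sqrt(1 − |a_n|²) · sqrt(1 − |a_k|²). -/
/-- The `m`-th Taylor coefficient of `f` at `0`, namely `f^{(m)}(0)/m!`. -/
noncomputable def taylorCoeff (f : ℂ → ℂ) (m : ℕ) : ℂ :=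
  iteratedDeriv m f 0 / (m.factorial : ℂ)

open Complex MeasureTheory Real Metric AddCircle ENNReal

lemma taylorCoeff_eq_cauchy (f : ℂ → ℂ) (hf : DifferentiableOn ℂ f {z : ℂ | ‖z‖ < 1})
    {r : ℝ} (hr0 : 0 < r) (hr1 : r < 1) (m : ℕ) :
    taylorCoeff f m = cauchyPowerSeries f 0 r m (fun _ => (1:ℂ)) := by
  lift r to NNReal using hr0.le with r'
  have hsub : closedBall (0:ℂ) r' ⊆ {z : ℂ | ‖z‖ < 1} := by
    intro z hz
    simp only [mem_closedBall, Complex.dist_eq, sub_zero] at hz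
    simpa using lt_of_le_of_lt hz hr1
  have hps : HasFPowerSeriesOnBall f (cauchyPowerSeries f 0 r') 0 r' :=
    (hf.mono hsub).hasFPowerSeriesOnBall (by exact_mod_cast hr0)
  have h1 := hps.factorial_smul (1:ℂ) m
  rw [← iteratedDeriv_eq_iteratedFDeriv] at h1
  rw [taylorCoeff, ← h1]
  simp only [nsmul_eq_mul]
  field_simp [Nat.factorial_ne_zero]

instance fact_two_pi : Fact (0 < 2 * π) := ⟨Real.two_pi_pos⟩

lemma fourier_coe_eq (m : ℤ) (θ : ℝ) :
    (fourier m (θ : AddCircle (2 * π)) : ℂ) = Complex.exp (θ * Complex.I) ^ m := by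
  rw [fourier_coe_apply]
  rw [← Complex.exp_int_mul]
  congr 1
  have hπ : (π : ℂ) ≠ 0 := by exact_mod_cast Real.pi_ne_zero
  field_simp
  push_cast
  ring

lemma fourierCoeff_circle (f : ℂ → ℂ) (hf : DifferentiableOn ℂ f {z : ℂ | ‖z‖ < 1})
    {r : ℝ} (hr0 : 0 < r) (hr1 : r < 1) (m : ℕ) :
    fourierCoeff (fun x : AddCircle (2 * π) => f (r * fourier 1 x)) (m : ℤ)
      = taylorCoeff f m * (r : ℂ) ^ m := by
  have hre : (r : ℂ) ≠ 0 := by exact_mod_cast hr0.ne'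
  have hexp : ∀ θ : ℝ, Complex.exp (θ * Complex.I) ≠ 0 := fun θ => Complex.exp_ne_zero _
  rw [taylorCoeff_eq_cauchy f hf hr0 hr1 m, cauchyPowerSeries_apply]
  have hint : (∮ z in C(0, r), ((1:ℂ) / (z - 0)) ^ m • (z - 0)⁻¹ • f z)
      = (Complex.I / (r:ℂ) ^ m) *
        ∫ θ in (0:ℝ)..2*π, (fourier (-(m:ℤ)) (θ : AddCircle (2*π)) : ℂ) * f (r * fourier 1 (θ : AddCircle (2*π))) := by
    rw [circleIntegral, ← intervalIntegral.integral_const_mul]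
    apply intervalIntegral.integral_congr
    intro θ _
    dsimp only
    have h1 : circleMap 0 r θ = (r:ℂ) * Complex.exp (θ * Complex.I) := circleMap_zero r θ
    rw [deriv_circleMap, h1, fourier_coe_eq, fourier_coe_eq]
    simp only [smul_eq_mul, sub_zero, zpow_neg, zpow_natCast, zpow_one]
    field_simp
    have e1 : (r:ℂ)^m * (r:ℂ)⁻¹^m = 1 := by rw [← mul_pow, mul_inv_cancel₀ hre, one_pow]
    have e2 : Complex.exp (θ * Complex.I)^m * (Complex.exp (θ * Complex.I))⁻¹^m = 1 := by
      rw [← mul_pow, mul_inv_cancel₀ (hexp θ), one_pow]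
    linear_combination (Complex.exp (θ * Complex.I)^m * (Complex.exp (θ * Complex.I))⁻¹^m * f (r * Complex.exp (θ * Complex.I))) * e1 + f (r * Complex.exp (θ * Complex.I)) * e2
  rw [hint, fourierCoeff_eq_intervalIntegral _ _ 0]
  have h2 : ∀ θ : ℝ, (fourier (-(m:ℤ)) (θ : AddCircle (2*π)) : ℂ) •
      ((fun x : AddCircle (2 * π) => f (r * fourier 1 x)) (θ : AddCircle (2*π)))
      = (fourier (-(m:ℤ)) (θ : AddCircle (2*π)) : ℂ) * f (r * fourier 1 (θ : AddCircle (2*π))) := fun θ => rfl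
  simp only [h2, zero_add]
  rw [smul_eq_mul]
  have hπ : (π : ℂ) ≠ 0 := by exact_mod_cast Real.pi_ne_zero
  simp only [Complex.real_smul]
  push_cast
  field_simp

lemma fourierCoeff_mul_fourier (F : AddCircle (2*π) → ℂ) (j m : ℤ) :
    fourierCoeff (fun x => F x * fourier j x) m = fourierCoeff F (m - j) := by
  unfold fourierCoeff
  apply integral_congr_ae
  apply Filter.Eventually.of_forall
  intro x
  dsimp only
  have : (-(m - j)) = (-m) + j := by ring
  rw [this, fourier_add]
  simp only [smul_eq_mul]
  ring

lemma integrable_of_bdd {E : Type*} [NormedAddCommGroup E] {g : AddCircle (2*π) → E} (hg : Continuous g) :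
    Integrable g haarAddCircle := by
  rw [← memLp_one_iff_integrable]
  obtain ⟨C, hC⟩ := (isCompact_univ.bddAbove_image (hg.norm.continuousOn)).imp
    (fun C hC => fun x => hC ⟨x, Set.mem_univ x, rfl⟩)
  exact MemLp.of_bound hg.aestronglyMeasurable C (Filter.Eventually.of_forall hC)

lemma integral_fourier_eq_zero {j : ℤ} (hj : j ≠ 0) :
    (∫ x : AddCircle (2*π), (fourier j x : ℂ) ∂haarAddCircle) = 0 := by
  have h0 : fourierCoeff (fun x : AddCircle (2*π) => (fourier j x : ℂ)) 0
      = ∫ x : AddCircle (2*π), (fourier j x : ℂ) ∂haarAddCircle := by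
    unfold fourierCoeff
    apply integral_congr_ae
    apply Filter.Eventually.of_forall
    intro x
    dsimp only
    simp [fourier_zero]
  rw [← h0, fourierCoeff_eq_intervalIntegral _ _ 0]
  have hcj : (j : ℂ) * Complex.I ≠ 0 := by
    simp [Complex.I_ne_zero, hj]
  have : (∫ x in (0:ℝ)..0 + 2*π, (fourier (-0) (x : AddCircle (2*π)) : ℂ) •
      (fourier j (x : AddCircle (2*π)) : ℂ)) = ∫ x in (0:ℝ)..2*π, Complex.exp ((j * Complex.I) * x) := by
    rw [zero_add]
    apply intervalIntegral.integral_congr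
    intro x _
    dsimp only
    rw [neg_zero, fourier_coe_eq, fourier_coe_eq]
    norm_num
    rw [← Complex.exp_int_mul]
    congr 1
    ring
  rw [this, integral_exp_mul_complex hcj]
  have h1 : Complex.exp ((j:ℂ) * Complex.I * ((2*π : ℝ) : ℂ)) = 1 := by
    rw [show ((j:ℂ) * Complex.I * ((2*π : ℝ) : ℂ)) = j * (2*π*Complex.I) by push_cast; ring]
    exact Complex.exp_int_mul_two_pi_mul_I j
  push_cast at h1
  simp [h1]

lemma abs_fourier (j : ℤ) (x : AddCircle (2*π)) : ‖fourier j x‖ = 1 := by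
  rw [fourier_apply]
  exact Circle.norm_coe _

lemma fourierCoeff_comb (F : AddCircle (2*π) → ℂ) (hF : Continuous F) (α c : ℂ) (j m : ℤ) :
    fourierCoeff (fun x => F x * (α + c * fourier j x)) m
      = α * fourierCoeff F m + c * fourierCoeff F (m - j) := by
  rw [← fourierCoeff_mul_fourier F j m]
  unfold fourierCoeff
  rw [← integral_const_mul, ← integral_const_mul, ← integral_add]
  · apply integral_congr_ae
    apply Filter.Eventually.of_forall
    intro x
    dsimp only
    simp only [smul_eq_mul]
    ring
  · apply Integrable.const_mul
    apply integrable_of_bdd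
    exact (map_continuous (fourier (-m))).smul hF
  · apply Integrable.const_mul
    apply integrable_of_bdd
    exact (map_continuous (fourier (-m))).smul (hF.mul (map_continuous (fourier j)))

lemma taylorCoeff_zero (f : ℂ → ℂ) : taylorCoeff f 0 = f 0 := by
  simp [taylorCoeff, iteratedDeriv_zero]

lemma key_r (f : ℂ → ℂ) (hf : DifferentiableOn ℂ f {z : ℂ | ‖z‖ < 1})
    (hb : ∀ z : ℂ, ‖z‖ < 1 → ‖f z‖ ≤ 1)
    (h0 : f 0 = 0) (n k : ℕ) (hn : 1 ≤ n) (hk : 1 ≤ k) (α β : ℂ)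
    {r : ℝ} (hr0 : 0 < r) (hr1 : r < 1) :
    ‖α * taylorCoeff f k‖^2 * r^(2*k)
      + ‖α * taylorCoeff f (n+k) + β * taylorCoeff f n‖^2 * r^(2*(n+k))
      ≤ ‖α‖^2 + ‖β‖^2 := by
  set F0 : AddCircle (2*π) → ℂ := fun x => f (r * fourier 1 x) with hF0
  have hmem : ∀ x : AddCircle (2*π), ((r:ℂ) * fourier 1 x) ∈ {z : ℂ | ‖z‖ < 1} := by
    intro x
    simp only [Set.mem_setOf_eq, norm_mul, abs_fourier, Complex.norm_real, Real.norm_eq_abs, mul_one]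
    rwa [abs_of_pos hr0]
  have hF0c : Continuous F0 :=
    hf.continuousOn.comp_continuous (continuous_const.mul (map_continuous (fourier 1))) hmem
  set c : ℂ := β * (r:ℂ)^k with hc
  set u : AddCircle (2*π) → ℂ := fun x => F0 x * (α + c * fourier k x) with hu
  have huc : Continuous u := hF0c.mul (continuous_const.add (continuous_const.mul
    (map_continuous (fourier k))))
  have hbd : ∀ x, ‖u x‖ ≤ ‖α + c * fourier k x‖ := by
    intro x
    rw [hu]
    dsimp only
    rw [norm_mul]
    have : ‖F0 x‖ ≤ 1 := hb _ (hmem x)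
    nlinarith [norm_nonneg (α + c * fourier k x), norm_nonneg (F0 x)]
  have hu2 : MemLp u 2 haarAddCircle := by
    apply MemLp.of_bound huc.aestronglyMeasurable (‖α‖ + ‖c‖)
    apply Filter.Eventually.of_forall
    intro x
    refine (hbd x).trans ((norm_add_le _ _).trans ?_)
    simp [abs_fourier, Circle.norm_coe]
  set U := hu2.toLp u with hU
  have hae : ∀ᵐ x ∂haarAddCircle, U x = u x := hu2.coeFn_toLp
  have hFCU : ∀ m : ℤ, fourierCoeff (U : AddCircle (2*π) → ℂ) m = fourierCoeff u m := by
    intro m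
    unfold fourierCoeff
    apply integral_congr_ae
    filter_upwards [hae] with x hx
    rw [hx]
  have hu_eq : ∀ m : ℤ, fourierCoeff u m
      = α * fourierCoeff F0 m + c * fourierCoeff F0 (m - k) :=
    fun m => fourierCoeff_comb F0 hF0c α c k m
  have hFCk : fourierCoeff u (k:ℤ) = α * (taylorCoeff f k * (r:ℂ)^k) := by
    rw [hu_eq, sub_self]
    have h1 : fourierCoeff F0 ((k:ℕ):ℤ) = taylorCoeff f k * (r:ℂ)^k :=
      fourierCoeff_circle f hf hr0 hr1 k
    have h2 : fourierCoeff F0 ((0:ℕ):ℤ) = taylorCoeff f 0 * (r:ℂ)^0 :=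
      fourierCoeff_circle f hf hr0 hr1 0
    rw [h1]
    push_cast at h2
    rw [h2, taylorCoeff_zero, h0]
    ring
  have hFCnk : fourierCoeff u ((n+k:ℕ):ℤ)
      = (α * taylorCoeff f (n+k) + β * taylorCoeff f n) * (r:ℂ)^(n+k) := by
    rw [hu_eq]
    have h1 : fourierCoeff F0 ((n+k:ℕ):ℤ) = taylorCoeff f (n+k) * (r:ℂ)^(n+k) :=
      fourierCoeff_circle f hf hr0 hr1 (n+k)
    have h2 : fourierCoeff F0 ((n:ℕ):ℤ) = taylorCoeff f n * (r:ℂ)^n :=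
      fourierCoeff_circle f hf hr0 hr1 n
    have h3 : ((n+k:ℕ):ℤ) - (k:ℤ) = ((n:ℕ):ℤ) := by push_cast; ring
    rw [h1, h3, h2, hc]
    push_cast
    ring
  -- Bessel / Parseval
  have hsummable : Summable (fun i : ℤ => ‖fourierCoeff (U : AddCircle (2*π) → ℂ) i‖^2) := by
    have h1 : ∀ i, fourierCoeff (U : AddCircle (2*π) → ℂ) i = fourierBasis.repr U i :=
      fun i => (fourierBasis_repr U i).symm
    simp only [h1]
    have h2 := lp.memℓp (fourierBasis.repr U)
    have h3 := (memℓp_gen_iff (by norm_num : 0 < (2:ℝ≥0∞).toReal)).1 h2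
    have h4 : ∀ x : ℝ, 0 ≤ x → x ^ ((2:ℝ≥0∞).toReal) = x^2 := by
      intro x hx
      rw [show (2:ℝ≥0∞).toReal = ((2:ℕ):ℝ) by norm_num, Real.rpow_natCast]
    apply h3.congr
    intro i
    rw [h4 _ (norm_nonneg _)]
  have hparseval := tsum_sq_fourierCoeff U
  have hne : ((k:ℕ):ℤ) ≠ ((n+k:ℕ):ℤ) := by
    intro h
    push_cast at h
    omega
  have hbessel : ‖fourierCoeff u (k:ℤ)‖^2 + ‖fourierCoeff u ((n+k:ℕ):ℤ)‖^2
      ≤ ∫ t : AddCircle (2*π), ‖u t‖^2 ∂haarAddCircle := by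
    have hfin : ∑ i ∈ ({((k:ℕ):ℤ), ((n+k:ℕ):ℤ)} : Finset ℤ),
        ‖fourierCoeff (U : AddCircle (2*π) → ℂ) i‖^2
        = ‖fourierCoeff u (k:ℤ)‖^2 + ‖fourierCoeff u ((n+k:ℕ):ℤ)‖^2 := by
      rw [Finset.sum_pair hne, hFCU, hFCU]
    rw [← hfin]
    refine (hsummable.sum_le_tsum _ (fun i _ => sq_nonneg _)).trans_eq ?_
    rw [hparseval]
    apply integral_congr_ae
    filter_upwards [hae] with x hx
    rw [hx]
  have hGint : (∫ t : AddCircle (2*π), ‖α + c * fourier (k:ℤ) t‖^2 ∂haarAddCircle)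
      = ‖α‖^2 + ‖c‖^2 := by
    set w : ℂ := α * (starRingEnd ℂ) c with hw
    have hpt : ∀ t : AddCircle (2*π), ‖α + c * fourier (k:ℤ) t‖^2
        = (Complex.normSq α + Complex.normSq c) + 2*(w * fourier (-(k:ℤ)) t).re := by
      intro t
      rw [Complex.sq_norm, Complex.normSq_add]
      have h1 : Complex.normSq (c * fourier (k:ℤ) t) = Complex.normSq c := by
        rw [Complex.normSq_mul, ← Complex.sq_norm (fourier (k:ℤ) t), abs_fourier]
        norm_num
      have h2 : (starRingEnd ℂ) (c * fourier (k:ℤ) t) = (starRingEnd ℂ) c * fourier (-(k:ℤ)) t := by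
        rw [map_mul, fourier_neg]
      rw [h1, h2]
      rw [hw]
      ring_nf
    have hBc : Continuous (fun t : AddCircle (2*π) => w * fourier (-(k:ℤ)) t) :=
      continuous_const.mul (map_continuous _)
    have hBint : Integrable (fun t : AddCircle (2*π) => w * fourier (-(k:ℤ)) t) haarAddCircle :=
      integrable_of_bdd hBc
    have hsplit : (∫ t : AddCircle (2*π), ‖α + c * fourier (k:ℤ) t‖^2 ∂haarAddCircle)
        = (∫ _t : AddCircle (2*π), (Complex.normSq α + Complex.normSq c) ∂haarAddCircle)
          + ∫ t : AddCircle (2*π), 2*(w * fourier (-(k:ℤ)) t).re ∂haarAddCircle := by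
      rw [← integral_add (integrable_const _)]
      · exact integral_congr_ae (Filter.Eventually.of_forall fun t => hpt t)
      · exact (hBint.re).const_mul 2
    rw [hsplit, integral_const]
    have hre : (∫ t : AddCircle (2*π), 2*(w * fourier (-(k:ℤ)) t).re ∂haarAddCircle)
        = 2 * (∫ t : AddCircle (2*π), w * fourier (-(k:ℤ)) t ∂haarAddCircle).re := by
      rw [integral_const_mul]
      congr 1
      have h5 := integral_re hBint
      simpa using h5
    rw [hre]
    have hzero : (∫ t : AddCircle (2*π), w * fourier (-(k:ℤ)) t ∂haarAddCircle) = 0 := by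
      rw [integral_const_mul, integral_fourier_eq_zero (by omega : -(k:ℤ) ≠ 0)]
      ring
    rw [hzero]
    simp [← Complex.sq_norm]
  have hmono : (∫ t : AddCircle (2*π), ‖u t‖^2 ∂haarAddCircle)
      ≤ ∫ t : AddCircle (2*π), ‖α + c * fourier (k:ℤ) t‖^2 ∂haarAddCircle := by
    apply integral_mono
    · exact integrable_of_bdd ((huc.norm).pow 2)
    · exact integrable_of_bdd (((continuous_const.add (continuous_const.mul
        (map_continuous (fourier (k:ℤ))))).norm).pow 2)
    · intro x
      exact pow_le_pow_left₀ (norm_nonneg _) (hbd x) 2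
  have hrpow : ∀ (x : ℂ) (j : ℕ), ‖x * (r:ℂ)^j‖^2 = ‖x‖^2 * r^(2*j) := by
    intro x j
    rw [norm_mul, norm_pow, Complex.norm_real, Real.norm_eq_abs, abs_of_pos hr0, mul_pow,
      ← pow_mul, mul_comm j 2]
  have g1 : ‖fourierCoeff u (k:ℤ)‖^2 = ‖α * taylorCoeff f k‖^2 * r^(2*k) := by
    rw [hFCk, show α * (taylorCoeff f k * (r:ℂ)^k) = (α * taylorCoeff f k) * (r:ℂ)^k by ring,
      hrpow]
  have g2 : ‖fourierCoeff u ((n+k:ℕ):ℤ)‖^2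
      = ‖α * taylorCoeff f (n+k) + β * taylorCoeff f n‖^2 * r^(2*(n+k)) := by
    rw [hFCnk, hrpow]
  have hcle : ‖c‖^2 ≤ ‖β‖^2 := by
    rw [hc, norm_mul, norm_pow, Complex.norm_real, Real.norm_eq_abs, abs_of_pos hr0]
    have h1 : r^k ≤ 1 := pow_le_one₀ hr0.le hr1.le
    have h2 : (0:ℝ) ≤ r^k := pow_nonneg hr0.le k
    have h3 : (r^k)^2 ≤ 1 := by nlinarith
    nlinarith [sq_nonneg ‖β‖, norm_nonneg β]
  calc ‖α * taylorCoeff f k‖^2 * r^(2*k)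
      + ‖α * taylorCoeff f (n+k) + β * taylorCoeff f n‖^2 * r^(2*(n+k))
      = ‖fourierCoeff u (k:ℤ)‖^2 + ‖fourierCoeff u ((n+k:ℕ):ℤ)‖^2 := by rw [g1, g2]
    _ ≤ ∫ t : AddCircle (2*π), ‖u t‖^2 ∂haarAddCircle := hbessel
    _ ≤ ∫ t : AddCircle (2*π), ‖α + c * fourier (k:ℤ) t‖^2 ∂haarAddCircle := hmono
    _ = ‖α‖^2 + ‖c‖^2 := hGint
    _ ≤ ‖α‖^2 + ‖β‖^2 := by linarith

lemma key (f : ℂ → ℂ) (hf : DifferentiableOn ℂ f {z : ℂ | ‖z‖ < 1})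
    (hb : ∀ z : ℂ, ‖z‖ < 1 → ‖f z‖ ≤ 1)
    (h0 : f 0 = 0) (n k : ℕ) (hn : 1 ≤ n) (hk : 1 ≤ k) (α β : ℂ) :
    ‖α * taylorCoeff f k‖^2 + ‖α * taylorCoeff f (n+k) + β * taylorCoeff f n‖^2
      ≤ ‖α‖^2 + ‖β‖^2 := by
  set C1 := ‖α * taylorCoeff f k‖^2 with hC1
  set C2 := ‖α * taylorCoeff f (n+k) + β * taylorCoeff f n‖^2 with hC2
  have htend : Filter.Tendsto (fun r : ℝ => C1 * r^(2*k) + C2 * r^(2*(n+k)))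
      (nhdsWithin 1 (Set.Iio 1)) (nhds (C1 + C2)) := by
    have hcont : Continuous fun r : ℝ => C1 * r^(2*k) + C2 * r^(2*(n+k)) := by continuity
    have h2 := hcont.tendsto 1
    simp only [one_pow, mul_one] at h2
    exact h2.mono_left nhdsWithin_le_nhds
  apply le_of_tendsto htend
  filter_upwards [Ioo_mem_nhdsLT_of_mem (by norm_num : (1:ℝ) ∈ Set.Ioc 0 1)] with r hr
  exact key_r f hf hb h0 n k hn hk α β hr.1 hr.2

lemma dir_spec (z : ℂ) : ‖(if z = 0 then 1 else z / ‖z‖ : ℂ)‖ = 1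
    ∧ z = (‖z‖:ℂ) * (if z = 0 then 1 else z / ‖z‖) := by
  by_cases h : z = 0
  · simp [h]
  · have hz : ‖z‖ ≠ 0 := norm_ne_zero_iff.mpr h
    have hzc : (‖z‖:ℂ) ≠ 0 := by exact_mod_cast hz
    constructor
    · rw [if_neg h, norm_div, Complex.norm_real, Real.norm_eq_abs,
        _root_.abs_of_nonneg (norm_nonneg z)]
      exact div_self hz
    · rw [if_neg h, mul_comm, div_mul_cancel₀ z hzc]

lemma quad_ineq {A u v : ℝ} (hA0 : 0 ≤ A) (hu0 : 0 ≤ u) (hv0 : 0 ≤ v)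
    (h1 : v^2 + A^2 ≤ 1) (h2 : u^2 ≤ 1)
    (H : ∀ t : ℝ, 0 ≤ t → v^2 + (A + t*u)^2 ≤ 1 + t^2) :
    A^2 ≤ (1-u^2)*(1-v^2) := by
  by_cases hu1 : u^2 < 1
  · have hs : 0 < 1 - u^2 := by linarith
    have t0 := H (A*u/(1-u^2)) (by positivity)
    have t0' := mul_le_mul_of_nonneg_right t0 (sq_nonneg (1-u^2))
    have hne : (1 - u^2) ≠ 0 := ne_of_gt hs
    field_simp at t0'
    nlinarith [t0', hs, sq_nonneg (A*u)]
  · have hu2 : u^2 = 1 := le_antisymm h2 (not_lt.mp hu1)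
    have hueq : u = 1 := by nlinarith
    have hAz : A = 0 := by
      by_contra hA
      have hApos : 0 < A := lt_of_le_of_ne hA0 (Ne.symm hA)
      have hnum : 0 ≤ (2 - v^2 - A^2) := by nlinarith
      have t0 := H ((2 - v^2 - A^2)/(2*A)) (by positivity)
      rw [hueq] at t0
      have h2A : (2*A) ≠ 0 := by positivity
      have ht' : 2*A*((2 - v^2 - A^2)/(2*A)) = 2 - v^2 - A^2 := by field_simp
      nlinarith [t0, ht']
    rw [hAz, hu2]
    norm_num

/-- **A coefficient inequality for self-maps of the disk vanishing at the origin.** -/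
theorem coeff_ineq_of_map_zero_eq_zero (f : ℂ → ℂ)
    (hf : DifferentiableOn ℂ f {z : ℂ | ‖z‖ < 1})
    (hb : ∀ z : ℂ, ‖z‖ < 1 → ‖f z‖ ≤ 1)
    (h0 : f 0 = 0)
    (n k : ℕ) (hn : 1 ≤ n) (hk : 1 ≤ k) :
    ‖taylorCoeff f (n + k)‖ ≤
      Real.sqrt (1 - ‖taylorCoeff f n‖ ^ 2) *
        Real.sqrt (1 - ‖taylorCoeff f k‖ ^ 2) := by
  have hA0 : 0 ≤ ‖taylorCoeff f (n+k)‖ := norm_nonneg _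
  have huu0 : 0 ≤ ‖taylorCoeff f n‖ := norm_nonneg _
  have hv0 : 0 ≤ ‖taylorCoeff f k‖ := norm_nonneg _
  have h1 : ‖taylorCoeff f k‖^2 + ‖taylorCoeff f (n+k)‖^2 ≤ 1 := by
    have h := key f hf hb h0 n k hn hk 1 0
    simp only [one_mul, zero_mul, add_zero, norm_one, norm_zero] at h
    nlinarith [h]
  have h2 : ‖taylorCoeff f n‖^2 ≤ 1 := by
    have h := key f hf hb h0 n k hn hk 0 1
    simp only [one_mul, zero_mul, zero_add, norm_one, norm_zero] at h
    nlinarith [h]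
  have H : ∀ t : ℝ, 0 ≤ t →
      ‖taylorCoeff f k‖^2 + (‖taylorCoeff f (n+k)‖ + t*‖taylorCoeff f n‖)^2 ≤ 1 + t^2 := by
    intro t ht
    set d1 : ℂ := if taylorCoeff f (n+k) = 0 then 1
      else taylorCoeff f (n+k) / ‖taylorCoeff f (n+k)‖ with hd1
    set d2 : ℂ := if taylorCoeff f n = 0 then 1
      else taylorCoeff f n / ‖taylorCoeff f n‖ with hd2
    obtain ⟨hd1n, hd1e⟩ := dir_spec (taylorCoeff f (n+k))
    obtain ⟨hd2n, hd2e⟩ := dir_spec (taylorCoeff f n)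
    rw [← hd1] at hd1n hd1e
    rw [← hd2] at hd2n hd2e
    set β : ℂ := (t:ℂ) * d1 * (starRingEnd ℂ) d2 with hβ
    have hβn : ‖β‖ = t := by
      rw [hβ, norm_mul, norm_mul, RCLike.norm_conj, hd1n, hd2n]
      simp [Complex.norm_real, Real.norm_eq_abs, _root_.abs_of_nonneg ht]
    have hconj : (starRingEnd ℂ) d2 * d2 = 1 := by
      rw [mul_comm, Complex.mul_conj]
      have hns : Complex.normSq d2 = 1 := by
        rw [← Complex.sq_norm, hd2n]
        norm_num
      rw [hns]
      norm_num
    have hcomb : taylorCoeff f (n+k) + β * taylorCoeff f n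
        = d1 * ((‖taylorCoeff f (n+k)‖:ℂ) + (t:ℂ)*(‖taylorCoeff f n‖:ℂ)) := by
      rw [hβ]
      nth_rewrite 1 [hd1e]
      nth_rewrite 1 [hd2e]
      calc (‖taylorCoeff f (n+k)‖:ℂ) * d1
            + (t:ℂ) * d1 * (starRingEnd ℂ) d2 * ((‖taylorCoeff f n‖:ℂ) * d2)
          = d1 * ((‖taylorCoeff f (n+k)‖:ℂ)
            + (t:ℂ)*(‖taylorCoeff f n‖:ℂ) * ((starRingEnd ℂ) d2 * d2)) := by ring
        _ = d1 * ((‖taylorCoeff f (n+k)‖:ℂ) + (t:ℂ)*(‖taylorCoeff f n‖:ℂ)) := by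
            rw [hconj]; ring
    have hkey := key f hf hb h0 n k hn hk 1 β
    rw [one_mul, one_mul, hcomb] at hkey
    have hnorm1 : ‖d1 * ((‖taylorCoeff f (n+k)‖:ℂ) + (t:ℂ)*(‖taylorCoeff f n‖:ℂ))‖
        = ‖taylorCoeff f (n+k)‖ + t*‖taylorCoeff f n‖ := by
      rw [norm_mul, hd1n, one_mul]
      have he : ((‖taylorCoeff f (n+k)‖:ℂ) + (t:ℂ)*(‖taylorCoeff f n‖:ℂ))
          = (((‖taylorCoeff f (n+k)‖ + t*‖taylorCoeff f n‖ : ℝ)):ℂ) := by push_cast; ring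
      rw [he, Complex.norm_real, Real.norm_eq_abs, _root_.abs_of_nonneg (by positivity)]
    rw [hnorm1, hβn] at hkey
    simpa using hkey
  have habs := quad_ineq hA0 huu0 hv0 h1 h2 H
  have hu2 : 0 ≤ 1 - ‖taylorCoeff f n‖^2 := by nlinarith [habs, sq_nonneg ‖taylorCoeff f (n+k)‖]
  calc ‖taylorCoeff f (n+k)‖ = Real.sqrt (‖taylorCoeff f (n+k)‖^2) := (Real.sqrt_sq hA0).symm
    _ ≤ Real.sqrt ((1-‖taylorCoeff f n‖^2)*(1-‖taylorCoeff f k‖^2)) := Real.sqrt_le_sqrt habs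
    _ = Real.sqrt (1-‖taylorCoeff f n‖^2) * Real.sqrt (1-‖taylorCoeff f k‖^2) :=
        Real.sqrt_mul hu2 _
end

section
/- (Douglas factorization lemma.) Let L, M₁, M₂ be complex Hilbert spaces, let A ∈ B(L,M₁), B ∈ B(L,M₂), and let c ≥ 0. Then B*B ≤ c²·A*A (in the Loewner order on selfadjoint operators on L) if and only if there exists C ∈ B(M₁,M₂) with B = C ∘ A and ‖C‖ ≤ c. Moreover, in that case there exists a unique C₀ ∈ B(M₁,M₂) with B = C₀ ∘ A, ‖C₀‖ ≤ c, and (range A)ᗮ ⊆ ker C₀, and this C₀ satisfies ‖C₀‖ ≤ ‖C‖ for every C ∈ B(M₁,M₂) with B = C ∘ A. -/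
open ContinuousLinearMap

theorem douglas_le_iff {L M₁ M₂ : Type*}
    [NormedAddCommGroup L] [InnerProductSpace ℂ L] [CompleteSpace L]
    [NormedAddCommGroup M₁] [InnerProductSpace ℂ M₁] [CompleteSpace M₁]
    [NormedAddCommGroup M₂] [InnerProductSpace ℂ M₂] [CompleteSpace M₂]
    (A : L →L[ℂ] M₁) (B : L →L[ℂ] M₂) (c : ℝ) (hc : 0 ≤ c) :
    adjoint B ∘L B ≤ (c ^ 2 : ℝ) • (adjoint A ∘L A) ↔ ∀ x, ‖B x‖ ≤ c * ‖A x‖ := by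
  rw [ContinuousLinearMap.le_def, ContinuousLinearMap.isPositive_iff_complex]
  have hinner : ∀ x : L,
      (inner ℂ (((c ^ 2 : ℝ) • (adjoint A ∘L A) - adjoint B ∘L B) x) x : ℂ)
        = ((c ^ 2 * ‖A x‖ ^ 2 - ‖B x‖ ^ 2 : ℝ) : ℂ) := by
    intro x
    rw [ContinuousLinearMap.sub_apply, inner_sub_left, ContinuousLinearMap.smul_apply,
      ContinuousLinearMap.comp_apply, ContinuousLinearMap.comp_apply,
      RCLike.real_smul_eq_coe_smul (K := ℂ), inner_smul_left,
      ContinuousLinearMap.adjoint_inner_left, ContinuousLinearMap.adjoint_inner_left,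
      inner_self_eq_norm_sq_to_K, inner_self_eq_norm_sq_to_K, RCLike.conj_ofReal]
    norm_cast
  constructor
  · intro h x
    have h2 := (h x).2
    rw [hinner x] at h2
    simp only [RCLike.re_to_complex, Complex.ofReal_re] at h2
    have hsq : ‖B x‖ ^ 2 ≤ (c * ‖A x‖) ^ 2 := by nlinarith
    exact (pow_le_pow_iff_left₀ (norm_nonneg _) (mul_nonneg hc (norm_nonneg _))
      two_ne_zero).mp hsq
  · intro h x
    rw [hinner x]
    simp only [RCLike.re_to_complex, Complex.ofReal_re]
    have h2 : ‖B x‖ ^ 2 ≤ (c * ‖A x‖) ^ 2 :=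
      pow_le_pow_left₀ (norm_nonneg _) (h x) 2
    exact ⟨trivial, by nlinarith⟩

theorem douglas_construct {L M₁ M₂ : Type*}
    [NormedAddCommGroup L] [InnerProductSpace ℂ L] [CompleteSpace L]
    [NormedAddCommGroup M₁] [InnerProductSpace ℂ M₁] [CompleteSpace M₁]
    [NormedAddCommGroup M₂] [InnerProductSpace ℂ M₂] [CompleteSpace M₂]
    (A : L →L[ℂ] M₁) (B : L →L[ℂ] M₂) (c : ℝ) (hc : 0 ≤ c)
    (hkey : ∀ x, ‖B x‖ ≤ c * ‖A x‖) :
    ∃ C₀ : M₁ →L[ℂ] M₂,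
      (B = C₀ ∘L A ∧ ‖C₀‖ ≤ c ∧ (LinearMap.range (A : L →ₗ[ℂ] M₁))ᗮ ≤ LinearMap.ker (C₀ : M₁ →ₗ[ℂ] M₂)) ∧
      (∀ C : M₁ →L[ℂ] M₂, B = C ∘L A →
        (LinearMap.range (A : L →ₗ[ℂ] M₁))ᗮ ≤ LinearMap.ker (C : M₁ →ₗ[ℂ] M₂) → C = C₀) ∧
      (∀ C : M₁ →L[ℂ] M₂, B = C ∘L A → ‖C₀‖ ≤ ‖C‖) := by
  classical
  have hBA : ∀ x x' : L, A x = A x' → B x = B x' := by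
    intro x x' hxx
    have h1 := hkey (x - x')
    rw [map_sub, map_sub, hxx, sub_self, norm_zero, mul_zero] at h1
    have h2 := le_antisymm h1 (norm_nonneg _)
    rwa [norm_eq_zero, sub_eq_zero] at h2
  set p : Submodule ℂ M₁ := LinearMap.range (A : L →ₗ[ℂ] M₁) with hp
  let sec : p → L := fun y => (LinearMap.mem_range.mp y.2).choose
  have hsec : ∀ y : p, A (sec y) = (y : M₁) := fun y =>
    (LinearMap.mem_range.mp y.2).choose_spec
  -- the densely defined operator on range A
  let g : p →ₗ[ℂ] M₂ :=
    { toFun := fun y => B (sec y)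
      map_add' := by
        intro y z
        show B (sec (y + z)) = B (sec y) + B (sec z)
        have h : A (sec (y + z)) = A (sec y + sec z) := by
          rw [map_add, hsec, hsec, hsec]; rfl
        rw [hBA _ _ h, map_add]
      map_smul' := by
        intro a y
        show B (sec (a • y)) = a • B (sec y)
        have h : A (sec (a • y)) = A (a • sec y) := by
          rw [map_smul, hsec, hsec]; rfl
        rw [hBA _ _ h, map_smul]}
  have hg : ∀ (y : p) (x : L), A x = (y : M₁) → g y = B x := by
    intro y x hx
    exact hBA _ _ ((hsec y).trans hx.symm)
  have hgbound : ∀ y : p, ‖g y‖ ≤ c * ‖y‖ := by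
    intro y
    have := hkey (sec y)
    rwa [hsec y] at this
  let gc : p →L[ℂ] M₂ := g.mkContinuous c hgbound
  have hgc : ∀ (y : p) (x : L), A x = (y : M₁) → gc y = B x := hg
  have hgcnorm : ‖gc‖ ≤ c := LinearMap.mkContinuous_norm_le g hc hgbound
  -- the closure
  set K : Submodule ℂ M₁ := p.topologicalClosure with hK
  haveI : CompleteSpace K := (Submodule.isClosed_topologicalClosure p).completeSpace_coe
  -- the inclusion p →L K
  let e : p →L[ℂ] K :=
    LinearMap.mkContinuous (Submodule.inclusion p.le_topologicalClosure) 1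
      (fun y => by rw [one_mul]; exact le_of_eq rfl)
  have he_apply : ∀ y : p, ((e y : K) : M₁) = (y : M₁) := fun y => rfl
  have h_e : ∀ y : p, ‖y‖ ≤ ((1 : NNReal) : ℝ) * ‖e y‖ := fun y => by
    rw [NNReal.coe_one, one_mul]
    exact le_of_eq rfl
  have h_dense : DenseRange e := by
    intro z
    rw [closure_subtype]
    have himg : (↑) '' Set.range e = (p : Set M₁) := by
      ext w
      constructor
      · rintro ⟨u, ⟨y, rfl⟩, rfl⟩
        exact y.2
      · intro hw
        exact ⟨e ⟨w, hw⟩, ⟨⟨w, hw⟩, rfl⟩, rfl⟩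
    rw [himg]
    exact (Submodule.topologicalClosure_coe p) ▸ z.2
  -- the extension to K
  set D : K →L[ℂ] M₂ :=
    gc.extend e with hD
  have hD_eq : ∀ y : p, D (e y) = gc y := fun y => ContinuousLinearMap.extend_eq _ h_dense
    (ContinuousLinearMap.isUniformEmbedding_of_bound e h_e).isUniformInducing y
  have hDnorm : ‖D‖ ≤ c := by
    have h1 := ContinuousLinearMap.opNorm_extend_le gc h_dense h_e
    rw [NNReal.coe_one, one_mul] at h1
    exact h1.trans hgcnorm
  set P : M₁ →L[ℂ] K := K.orthogonalProjectionOnto with hPdef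
  set C₀ : M₁ →L[ℂ] M₂ := D.comp P with hC₀def
  have hPy : ∀ y : M₁, ‖P y‖ ≤ ‖y‖ := by
    intro y
    calc ‖P y‖ ≤ ‖P‖ * ‖y‖ := P.le_opNorm y
    _ ≤ 1 * ‖y‖ := mul_le_mul_of_nonneg_right (Submodule.orthogonalProjectionOnto_norm_le K) (norm_nonneg y)
    _ = ‖y‖ := one_mul _
  -- ∀ C with B = C ∘L A, D agrees with C on K
  have hagree : ∀ C : M₁ →L[ℂ] M₂, B = C ∘L A → ∀ z : K, D z = C (z : M₁) := by
    intro C hC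
    have heq : (D : K → M₂) = fun z : K => C (z : M₁) := by
      refine h_dense.equalizer D.continuous (C.continuous.comp continuous_subtype_val) ?_
      funext y
      show D (e y) = C ((e y : K) : M₁)
      rw [hD_eq y, he_apply y]
      have h1 : gc y = B (sec y) := rfl
      rw [h1, hC]
      show C (A (sec y)) = C (y : M₁)
      rw [hsec y]
    exact fun z => congrFun heq z
  -- orthogonal complements agree
  have horth : Kᗮ = pᗮ := by
    apply le_antisymm
    · exact Submodule.orthogonal_le p.le_topologicalClosure
    · intro y hy
      rw [Submodule.mem_orthogonal] at hy ⊢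
      intro v hv
      have hvmem : v ∈ closure (p : Set M₁) := (Submodule.topologicalClosure_coe p) ▸ hv
      have hclosed : IsClosed {w : M₁ | (inner ℂ w y : ℂ) = 0} :=
        isClosed_eq (continuous_id.inner continuous_const) continuous_const
      have hsub : (p : Set M₁) ⊆ {w : M₁ | (inner ℂ w y : ℂ) = 0} := fun w hw => hy w hw
      exact closure_minimal hsub hclosed hvmem
  have hPA : ∀ x : L, P (A x) = e ⟨A x, ⟨x, rfl⟩⟩ := by
    intro x
    have hmemK : A x ∈ K := p.le_topologicalClosure ⟨x, rfl⟩
    apply Subtype.ext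
    rw [he_apply]
    exact Submodule.starProjection_eq_self_iff.mpr hmemK
  refine ⟨C₀, ⟨?_, ?_, ?_⟩, ?_, ?_⟩
  · -- factorization
    ext x
    show B x = D (P (A x))
    rw [hPA x, hD_eq]
    exact (hgc _ x rfl).symm
  · -- norm bound
    refine ContinuousLinearMap.opNorm_le_bound _ hc fun y => ?_
    show ‖D (P y)‖ ≤ c * ‖y‖
    calc ‖D (P y)‖ ≤ ‖D‖ * ‖P y‖ := D.le_opNorm _
    _ ≤ c * ‖y‖ := mul_le_mul hDnorm (hPy y) (norm_nonneg _) hc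
  · -- kernel condition
    intro y hy
    have hyK : y ∈ Kᗮ := horth ▸ hy
    show D (P y) = 0
    rw [hPdef, Submodule.orthogonalProjectionOnto_apply_of_mem_orthogonal hyK, map_zero]
  · -- uniqueness
    intro C hC hkerC
    ext y
    have hy2 : y - (P y : M₁) ∈ pᗮ := horth ▸ K.sub_starProjection_mem_orthogonal y
    have hCzero : C (y - (P y : M₁)) = 0 := hkerC hy2
    have h1 : C y = C (P y : M₁) := by
      conv_lhs => rw [show y = (P y : M₁) + (y - (P y : M₁)) by abel]
      rw [map_add, hCzero, add_zero]
    rw [h1, ← hagree C hC (P y)]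
    rfl
  · -- minimality
    intro C hC
    refine ContinuousLinearMap.opNorm_le_bound _ (norm_nonneg C) fun y => ?_
    show ‖D (P y)‖ ≤ ‖C‖ * ‖y‖
    rw [hagree C hC (P y)]
    calc ‖C (P y : M₁)‖ ≤ ‖C‖ * ‖(P y : M₁)‖ := C.le_opNorm _
    _ ≤ ‖C‖ * ‖y‖ := mul_le_mul_of_nonneg_left (hPy y) (norm_nonneg C)

/-- **The Douglas factorization lemma, with minimal solution.** -/
theorem douglas_factorization {L M₁ M₂ : Type*}
    [NormedAddCommGroup L] [InnerProductSpace ℂ L] [CompleteSpace L]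
    [NormedAddCommGroup M₁] [InnerProductSpace ℂ M₁] [CompleteSpace M₁]
    [NormedAddCommGroup M₂] [InnerProductSpace ℂ M₂] [CompleteSpace M₂]
    (A : L →L[ℂ] M₁) (B : L →L[ℂ] M₂) (c : ℝ) (hc : 0 ≤ c) :
    (adjoint B ∘L B ≤ (c ^ 2 : ℝ) • (adjoint A ∘L A) ↔
      ∃ C : M₁ →L[ℂ] M₂, B = C ∘L A ∧ ‖C‖ ≤ c) ∧
    (adjoint B ∘L B ≤ (c ^ 2 : ℝ) • (adjoint A ∘L A) →
      ∃ C₀ : M₁ →L[ℂ] M₂,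
        (B = C₀ ∘L A ∧ ‖C₀‖ ≤ c ∧ (LinearMap.range (A : L →ₗ[ℂ] M₁))ᗮ ≤ LinearMap.ker (C₀ : M₁ →ₗ[ℂ] M₂)) ∧
        (∀ C : M₁ →L[ℂ] M₂, B = C ∘L A → ‖C‖ ≤ c →
          (LinearMap.range (A : L →ₗ[ℂ] M₁))ᗮ ≤ LinearMap.ker (C : M₁ →ₗ[ℂ] M₂) → C = C₀) ∧
        (∀ C : M₁ →L[ℂ] M₂, B = C ∘L A → ‖C₀‖ ≤ ‖C‖)) := by
  constructor
  · constructor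
    · intro h
      have hkey := (douglas_le_iff A B c hc).mp h
      obtain ⟨C₀, ⟨h1, h2, _⟩, _, _⟩ := douglas_construct A B c hc hkey
      exact ⟨C₀, h1, h2⟩
    · rintro ⟨C, hCA, hCn⟩
      refine (douglas_le_iff A B c hc).mpr fun x => ?_
      rw [hCA]
      calc ‖(C ∘L A) x‖ = ‖C (A x)‖ := rfl
      _ ≤ ‖C‖ * ‖A x‖ := C.le_opNorm _
      _ ≤ c * ‖A x‖ := mul_le_mul_of_nonneg_right hCn (norm_nonneg _)
  · intro h
    have hkey := (douglas_le_iff A B c hc).mp h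
    obtain ⟨C₀, h1, h2, h3⟩ := douglas_construct A B c hc hkey
    exact ⟨C₀, h1, fun C hCA _ hker => h2 C hCA hker, h3⟩
end
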